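/- arXiv:2211.01148 — 9 statements merged into one kernel-verified Lean document; each statement's English description precedes it below -/
import Mathlib

section
/- For any integers N ≥ 1 and p, and any complex number x, the alternating doubly infinite series ∑_{ν ∈ ℤ} (-1)^ν J_{Nν+p}(x) converges and equals (1/N) ∑_{q=0}^{N-1} exp(i x sin((2q+1)π/N)) · exp(-i(2q+1)πp/N). -/
open scoped Real

noncomputable def besselJNat (n : ℕ) (x : ℂ) : ℂ :=
  ∑' m : ℕ, (-1 : ℂ) ^ m / ((m.factorial : ℂ) * ((m + n).factorial : ℂ)) * (x / 2) ^ (2 * m + n)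

noncomputable def besselJ (n : ℤ) (x : ℂ) : ℂ :=
  if 0 ≤ n then besselJNat n.toNat x else (-1 : ℂ) ^ n.natAbs * besselJNat n.natAbs x

def pairEquiv : ℤ × ℕ ≃ ℕ × ℕ where
  toFun p := (p.2 + p.1.toNat, p.2 + (-p.1).toNat)
  invFun p := ((p.1 : ℤ) - (p.2 : ℤ), min p.1 p.2)
  left_inv := by
    rintro ⟨n, k⟩
    simp only [Prod.mk.injEq]
    constructor <;> [push_cast; skip] <;> omega
  right_inv := by
    rintro ⟨j, k⟩
    simp only [Prod.mk.injEq]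
    constructor <;> omega

lemma fiber_eq (x t : ℂ) (ht0 : t ≠ 0) (n : ℤ) :
    ∑' k : ℕ, (x / 2 * t) ^ (k + n.toNat) / ((k + n.toNat).factorial : ℂ) *
      ((-(x / 2) * t⁻¹) ^ (k + (-n).toNat) / ((k + (-n).toNat).factorial : ℂ)) =
    besselJ n x * t ^ n := by
  rcases le_or_gt 0 n with hn | hn
  · set m := n.toNat with hm
    have hneg : (-n).toNat = 0 := by omega
    have hterm : ∀ k : ℕ,
        (x / 2 * t) ^ (k + m) / ((k + m).factorial : ℂ) *
          ((-(x / 2) * t⁻¹) ^ (k + (-n).toNat) / ((k + (-n).toNat).factorial : ℂ)) =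
        ((-1 : ℂ) ^ k / ((k.factorial : ℂ) * ((k + m).factorial : ℂ)) * (x / 2) ^ (2 * k + m)) * t ^ m := by
      intro k
      rw [hneg]
      have htk : t ^ k * t⁻¹ ^ k = 1 := by rw [← mul_pow, mul_inv_cancel₀ ht0, one_pow]
      have hxp : (x / 2 : ℂ) ^ (k + m) * (x / 2) ^ k = (x / 2) ^ (2 * k + m) := by
        rw [← pow_add]; congr 1; omega
      have htp : t ^ (k + m) * t⁻¹ ^ k = t ^ m := by
        calc t ^ (k + m) * t⁻¹ ^ k = t ^ m * (t ^ k * t⁻¹ ^ k) := by rw [pow_add]; ring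
          _ = t ^ m := by rw [htk, mul_one]
      have h3 : (-(x / 2) * t⁻¹) ^ k = (-1 : ℂ) ^ k * (x / 2) ^ k * t⁻¹ ^ k := by
        rw [show -(x / 2) * t⁻¹ = -1 * (x / 2) * t⁻¹ by ring, mul_pow, mul_pow]
      have expand : (x / 2 * t) ^ (k + m) * (-(x / 2) * t⁻¹) ^ (k + 0) =
          (-1 : ℂ) ^ k * (x / 2) ^ (2 * k + m) * t ^ m := by
        rw [Nat.add_zero, mul_pow, h3]
        calc (x / 2) ^ (k + m) * t ^ (k + m) * ((-1 : ℂ) ^ k * (x / 2) ^ k * t⁻¹ ^ k)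
            = (-1 : ℂ) ^ k * ((x / 2) ^ (k + m) * (x / 2) ^ k) * (t ^ (k + m) * t⁻¹ ^ k) := by ring
          _ = _ := by rw [hxp, htp]
      rw [div_mul_div_comm, expand]
      ring
    rw [tsum_congr hterm, tsum_mul_right]
    have hb : besselJ n x = besselJNat m x := by rw [besselJ, if_pos hn]
    rw [hb, besselJNat]
    congr 1
    rw [show n = (m : ℤ) by omega, zpow_natCast]
  · set m := (-n).toNat with hm
    have hpos : n.toNat = 0 := by omega
    have hterm : ∀ k : ℕ,
        (x / 2 * t) ^ (k + n.toNat) / ((k + n.toNat).factorial : ℂ) *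
          ((-(x / 2) * t⁻¹) ^ (k + m) / ((k + m).factorial : ℂ)) =
        ((-1 : ℂ) ^ k / ((k.factorial : ℂ) * ((k + m).factorial : ℂ)) * (x / 2) ^ (2 * k + m)) *
          ((-1 : ℂ) ^ m * (t ^ m)⁻¹) := by
      intro k
      rw [hpos]
      have htk : t ^ k * t⁻¹ ^ k = 1 := by rw [← mul_pow, mul_inv_cancel₀ ht0, one_pow]
      have hxp : (x / 2 : ℂ) ^ k * (x / 2) ^ (k + m) = (x / 2) ^ (2 * k + m) := by
        rw [← pow_add]; congr 1; omega
      have htp : t ^ k * t⁻¹ ^ (k + m) = (t ^ m)⁻¹ := by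
        calc t ^ k * t⁻¹ ^ (k + m) = (t ^ k * t⁻¹ ^ k) * t⁻¹ ^ m := by rw [pow_add]; ring
          _ = t⁻¹ ^ m := by rw [htk, one_mul]
          _ = (t ^ m)⁻¹ := inv_pow t m
      have h3 : (-(x / 2) * t⁻¹) ^ (k + m) =
          (-1 : ℂ) ^ k * (-1 : ℂ) ^ m * (x / 2) ^ (k + m) * t⁻¹ ^ (k + m) := by
        rw [show -(x / 2) * t⁻¹ = -1 * (x / 2) * t⁻¹ by ring, mul_pow, mul_pow, pow_add]
      have expand : (x / 2 * t) ^ (k + 0) * (-(x / 2) * t⁻¹) ^ (k + m) =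
          (-1 : ℂ) ^ k * (x / 2) ^ (2 * k + m) * ((-1 : ℂ) ^ m * (t ^ m)⁻¹) := by
        rw [Nat.add_zero, mul_pow, h3]
        calc (x / 2) ^ k * t ^ k * ((-1 : ℂ) ^ k * (-1 : ℂ) ^ m * (x / 2) ^ (k + m) * t⁻¹ ^ (k + m))
            = (-1 : ℂ) ^ k * ((x / 2) ^ k * (x / 2) ^ (k + m)) * ((-1 : ℂ) ^ m * (t ^ k * t⁻¹ ^ (k + m))) := by
              ring
          _ = _ := by rw [hxp, htp]
      rw [div_mul_div_comm, expand]
      ring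
    rw [tsum_congr hterm, tsum_mul_right]
    have hb : besselJ n x = (-1 : ℂ) ^ m * besselJNat m x := by
      rw [besselJ, if_neg (by omega)]
      have : n.natAbs = m := by omega
      rw [this]
    have ht : t ^ n = (t ^ m)⁻¹ := by
      rw [show n = -(m : ℤ) by omega, zpow_neg, zpow_natCast]
    rw [hb, ht, besselJNat]
    ring

lemma hasSum_regroup (f g : ℕ → ℂ) (A B : ℂ) (hA : HasSum f A) (hB : HasSum g B)
    (h1 : Summable fun j => ‖f j‖) (h2 : Summable fun j => ‖g j‖) (S : ℤ → ℂ)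
    (hS : ∀ n : ℤ, ∑' k : ℕ, f (k + n.toNat) * g (k + (-n).toNat) = S n) :
    HasSum S (A * B) := by
  have hsum : Summable fun p : ℕ × ℕ => f p.1 * g p.2 := summable_mul_of_summable_norm h1 h2
  have hF : HasSum (fun p : ℕ × ℕ => f p.1 * g p.2) (A * B) := hA.mul hB hsum
  have hFe : HasSum (fun p : ℤ × ℕ => f (p.2 + p.1.toNat) * g (p.2 + (-p.1).toNat)) (A * B) := by
    have h := pairEquiv.hasSum_iff.2 hF
    simpa [pairEquiv, Function.comp_def] using h
  apply hFe.prod_fiberwise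
  intro n
  have hs := (hFe.summable.prod_factor n).hasSum
  rwa [hS n] at hs

lemma jacobi_anger (x t : ℂ) (ht0 : t ≠ 0) :
    HasSum (fun n : ℤ => besselJ n x * t ^ n) (Complex.exp (x / 2 * (t - t⁻¹))) := by
  have hexp : Complex.exp (x / 2 * t) * Complex.exp (-(x / 2) * t⁻¹) =
      Complex.exp (x / 2 * (t - t⁻¹)) := by
    rw [← Complex.exp_add]; congr 1; ring
  rw [← hexp]
  apply hasSum_regroup (fun j : ℕ => (x / 2 * t) ^ j / (j.factorial : ℂ))
      (fun j : ℕ => (-(x / 2) * t⁻¹) ^ j / (j.factorial : ℂ))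
  · rw [Complex.exp_eq_exp_ℂ]; exact NormedSpace.expSeries_div_hasSum_exp _
  · rw [Complex.exp_eq_exp_ℂ]; exact NormedSpace.expSeries_div_hasSum_exp _
  · simpa [norm_div, norm_pow] using Real.summable_pow_div_factorial ‖x / 2 * t‖
  · simpa [norm_div, norm_pow] using Real.summable_pow_div_factorial ‖-(x / 2) * t⁻¹‖
  · intro n
    simpa using fiber_eq x t ht0 n

lemma exp_sin (θ : ℝ) (x : ℂ) :
    x / 2 * (Complex.exp ((θ : ℂ) * Complex.I) - (Complex.exp ((θ : ℂ) * Complex.I))⁻¹) =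
      Complex.I * x * (Real.sin θ : ℂ) := by
  rw [← Complex.exp_neg, Complex.ofReal_sin, Complex.sin,
    show -((θ : ℂ) * Complex.I) = -(θ : ℂ) * Complex.I by ring]
  linear_combination (x * (Complex.exp ((θ : ℂ) * Complex.I) -
    Complex.exp (-(θ : ℂ) * Complex.I)) / 2) * Complex.I_sq

lemma char_sum (N : ℕ) (hN : 1 ≤ N) (m : ℤ) :
    ∑ q ∈ Finset.range N, Complex.exp (((m : ℂ) * (2 * (q : ℂ) + 1) * (π : ℂ) / (N : ℂ)) * Complex.I)
      = if (N : ℤ) ∣ m then (N : ℂ) * (-1 : ℂ) ^ (m / (N : ℤ)) else 0 := by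
  have hN0 : (N : ℂ) ≠ 0 := Nat.cast_ne_zero.2 (by omega)
  set ω : ℂ := Complex.exp ((2 * (m : ℂ) * (π : ℂ) / (N : ℂ)) * Complex.I) with hω
  set c : ℂ := Complex.exp (((m : ℂ) * (π : ℂ) / (N : ℂ)) * Complex.I) with hc
  have hterm : ∀ q ∈ Finset.range N,
      Complex.exp (((m : ℂ) * (2 * (q : ℂ) + 1) * (π : ℂ) / (N : ℂ)) * Complex.I) = c * ω ^ q := by
    intro q _
    rw [hc, hω, ← Complex.exp_nat_mul, ← Complex.exp_add]
    congr 1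
    field_simp
    ring
  rw [Finset.sum_congr rfl hterm, ← Finset.mul_sum]
  by_cases hdvd : (N : ℤ) ∣ m
  · obtain ⟨ν, hv⟩ := hdvd
    have hω1 : ω = 1 := by
      rw [hω, show (2 * (m : ℂ) * (π : ℂ) / (N : ℂ)) * Complex.I
          = (ν : ℤ) * (2 * (π : ℂ) * Complex.I) by
        field_simp
        push_cast [hv]
        ring]
      exact Complex.exp_int_mul_two_pi_mul_I ν
    have hc1 : c = (-1 : ℂ) ^ ν := by
      rw [hc, show ((m : ℂ) * (π : ℂ) / (N : ℂ)) * Complex.I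
          = (ν : ℤ) * ((π : ℂ) * Complex.I) by
        field_simp
        push_cast [hv]
        ring]
      rw [Complex.exp_int_mul, Complex.exp_pi_mul_I]
    have hdiv : m / (N : ℤ) = ν := by
      rw [hv]; exact Int.mul_ediv_cancel_left _ (by exact_mod_cast (by omega : N ≠ 0))
    rw [if_pos ⟨ν, hv⟩, hω1, hdiv, hc1]
    simp
    ring
  · rw [if_neg hdvd]
    have hω1 : ω ≠ 1 := by
      intro h
      rw [hω, Complex.exp_eq_one_iff] at h
      obtain ⟨k, hk⟩ := h
      have h2 : (2 : ℂ) * (π : ℂ) * Complex.I ≠ 0 := by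
        refine mul_ne_zero (mul_ne_zero two_ne_zero ?_) Complex.I_ne_zero
        exact Complex.ofReal_ne_zero.2 Real.pi_ne_zero
      have h3 : ((m : ℂ) / (N : ℂ)) * (2 * (π : ℂ) * Complex.I)
          = (k : ℂ) * (2 * (π : ℂ) * Complex.I) := by linear_combination hk
      have h4 : (m : ℂ) / (N : ℂ) = (k : ℂ) := mul_right_cancel₀ h2 h3
      have h5 : (m : ℂ) = (k : ℂ) * (N : ℂ) := by field_simp at h4; linear_combination h4
      have h6 : m = k * (N : ℤ) := by exact_mod_cast h5
      exact hdvd ⟨k, by rw [h6]; ring⟩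
    have hωN : ω ^ N = 1 := by
      rw [hω, ← Complex.exp_nat_mul,
        show (N : ℂ) * ((2 * (m : ℂ) * (π : ℂ) / (N : ℂ)) * Complex.I)
          = (m : ℤ) * (2 * (π : ℂ) * Complex.I) by field_simp]
      exact Complex.exp_int_mul_two_pi_mul_I m
    rw [geom_sum_eq hω1 N, hωN]
    simp

theorem stmt_1 (N : ℕ) (hN : 1 ≤ N) (p : ℤ) (x : ℂ) :
    HasSum (fun ν : ℤ => (-1 : ℂ) ^ ν * besselJ ((N : ℤ) * ν + p) x)
      ((1 / (N : ℂ)) * ∑ q ∈ Finset.range N,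
        Complex.exp (Complex.I * x * (Real.sin ((2 * q + 1) * π / N) : ℝ)) *
          Complex.exp (-(((2 * (q : ℂ) + 1) * (π : ℂ) * (p : ℂ)) / (N : ℂ)) * Complex.I)) := by
  have hN0 : (N : ℂ) ≠ 0 := Nat.cast_ne_zero.2 (by omega)
  have hNZ : (N : ℤ) ≠ 0 := by exact_mod_cast (by omega : N ≠ 0)
  -- per-q Jacobi--Anger
  have hq : ∀ q ∈ Finset.range N, HasSum
      (fun n : ℤ => ((1 / (N : ℂ)) *
          Complex.exp (-(((2 * (q : ℂ) + 1) * (π : ℂ) * (p : ℂ)) / (N : ℂ)) * Complex.I)) *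
        (besselJ n x *
          Complex.exp ((((2 * q + 1) * π / N : ℝ) : ℂ) * Complex.I) ^ n))
      ((1 / (N : ℂ)) *
          Complex.exp (-(((2 * (q : ℂ) + 1) * (π : ℂ) * (p : ℂ)) / (N : ℂ)) * Complex.I) *
        (Complex.exp (Complex.I * x * (Real.sin ((2 * q + 1) * π / N) : ℝ)))) := by
    intro q _
    have h := (jacobi_anger x (Complex.exp ((((2 * q + 1) * π / N : ℝ) : ℂ) * Complex.I))
      (Complex.exp_ne_zero _)).mul_left
      ((1 / (N : ℂ)) * Complex.exp (-(((2 * (q : ℂ) + 1) * (π : ℂ) * (p : ℂ)) / (N : ℂ)) * Complex.I))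
    rwa [exp_sin ((2 * q + 1) * π / N) x] at h
  have hS := hasSum_sum hq
  -- rewrite the value
  have hval : ∑ q ∈ Finset.range N, ((1 / (N : ℂ)) *
          Complex.exp (-(((2 * (q : ℂ) + 1) * (π : ℂ) * (p : ℂ)) / (N : ℂ)) * Complex.I) *
        (Complex.exp (Complex.I * x * (Real.sin ((2 * q + 1) * π / N) : ℝ))))
      = (1 / (N : ℂ)) * ∑ q ∈ Finset.range N,
        Complex.exp (Complex.I * x * (Real.sin ((2 * q + 1) * π / N) : ℝ)) *
          Complex.exp (-(((2 * (q : ℂ) + 1) * (π : ℂ) * (p : ℂ)) / (N : ℂ)) * Complex.I) := by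
    rw [Finset.mul_sum]
    exact Finset.sum_congr rfl fun q _ => by ring
  rw [hval] at hS
  -- rewrite the function
  have hfun : ∀ n : ℤ, (∑ q ∈ Finset.range N, ((1 / (N : ℂ)) *
          Complex.exp (-(((2 * (q : ℂ) + 1) * (π : ℂ) * (p : ℂ)) / (N : ℂ)) * Complex.I)) *
        (besselJ n x * Complex.exp ((((2 * q + 1) * π / N : ℝ) : ℂ) * Complex.I) ^ n))
      = besselJ n x * ((1 / (N : ℂ)) * ∑ q ∈ Finset.range N,
          Complex.exp ((((n - p : ℤ) : ℂ) * (2 * (q : ℂ) + 1) * (π : ℂ) / (N : ℂ)) * Complex.I)) := by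
    intro n
    rw [Finset.mul_sum, Finset.mul_sum]
    refine Finset.sum_congr rfl fun q _ => ?_
    rw [← Complex.exp_int_mul]
    have hcomb : Complex.exp (-(((2 * (q : ℂ) + 1) * (π : ℂ) * (p : ℂ)) / (N : ℂ)) * Complex.I) *
        Complex.exp ((n : ℂ) * ((((2 * q + 1) * π / N : ℝ) : ℂ) * Complex.I))
        = Complex.exp ((((n - p : ℤ) : ℂ) * (2 * (q : ℂ) + 1) * (π : ℂ) / (N : ℂ)) * Complex.I) := by
      rw [← Complex.exp_add]
      congr 1
      push_cast
      field_simp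
      ring
    rw [← hcomb]
    ring
  simp only [hfun] at hS
  -- now filter via injection
  have hinj : Function.Injective (fun ν : ℤ => (N : ℤ) * ν + p) := by
    intro a b h
    simp only [add_left_inj] at h
    exact mul_left_cancel₀ hNZ h
  have hvanish : ∀ n ∉ Set.range (fun ν : ℤ => (N : ℤ) * ν + p),
      besselJ n x * ((1 / (N : ℂ)) * ∑ q ∈ Finset.range N,
          Complex.exp ((((n - p : ℤ) : ℂ) * (2 * (q : ℂ) + 1) * (π : ℂ) / (N : ℂ)) * Complex.I)) = 0 := by
    intro n hn
    have hnd : ¬ (N : ℤ) ∣ (n - p) := by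
      intro ⟨k, hk⟩
      exact hn ⟨k, show (N : ℤ) * k + p = n by omega⟩
    rw [char_sum N hN (n - p), if_neg hnd]
    simp
  have h2 := (hinj.hasSum_iff hvanish).2 hS
  have hcomp : ∀ ν : ℤ, besselJ ((N : ℤ) * ν + p) x * ((1 / (N : ℂ)) * ∑ q ∈ Finset.range N,
          Complex.exp (((((N : ℤ) * ν + p - p : ℤ) : ℂ) * (2 * (q : ℂ) + 1) * (π : ℂ) / (N : ℂ)) * Complex.I))
      = (-1 : ℂ) ^ ν * besselJ ((N : ℤ) * ν + p) x := by
    intro ν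
    rw [show (N : ℤ) * ν + p - p = (N : ℤ) * ν by ring, char_sum N hN _,
      if_pos ⟨ν, rfl⟩, Int.mul_ediv_cancel_left _ hNZ]
    field_simp
  simp only [Function.comp_def] at h2
  simp only [hcomp] at h2
  exact h2
end

section
/- The Jacobi–Anger expansion: for all complex x and real θ, exp(i x sin θ) = ∑_{n ∈ ℤ} J_n(x) e^{inθ}, where the sum over ℤ converges unconditionally. -/
open scoped Real

/-- Parametrization of `ℕ × ℕ` by integer `n = j - k` and `m = min j k`. -/
def jaEquiv : ℤ × ℕ ≃ ℕ × ℕ where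
  toFun p := if 0 ≤ p.1 then (p.2 + p.1.toNat, p.2) else (p.2, p.2 + p.1.natAbs)
  invFun q := ((q.1 : ℤ) - q.2, min q.1 q.2)
  left_inv p := by
    obtain ⟨n, m⟩ := p
    by_cases h : 0 ≤ n <;>
      simp only [h, if_true, if_false, Prod.mk.injEq] <;>
      constructor <;> omega
  right_inv q := by
    obtain ⟨j, k⟩ := q
    by_cases h : (0 : ℤ) ≤ (j : ℤ) - k <;>
      simp only [h, if_true, if_false, Prod.mk.injEq] <;>
      constructor <;> omega

theorem stmt_2 (x : ℂ) (θ : ℝ) :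
    HasSum (fun n : ℤ => besselJ n x * Complex.exp (Complex.I * (n : ℂ) * (θ : ℂ)))
      (Complex.exp (Complex.I * x * (Real.sin θ : ℝ))) := by
  classical
  set c : ℂ := x / 2 with hc
  set t : ℂ := Complex.exp (Complex.I * θ) with ht
  set s : ℂ := Complex.exp (-(Complex.I * θ)) with hs
  have hts : t * s = 1 := by
    rw [ht, hs, ← Complex.exp_add, add_neg_cancel, Complex.exp_zero]
  -- the two exponential series
  set f : ℕ → ℂ := fun j => (c * t) ^ j / j.factorial with hf
  set g : ℕ → ℂ := fun k => (-(c * s)) ^ k / k.factorial with hg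
  have hfs : HasSum f (Complex.exp (c * t)) := by
    rw [Complex.exp_eq_exp_ℂ]
    exact NormedSpace.expSeries_div_hasSum_exp (c * t)
  have hgs : HasSum g (Complex.exp (-(c * s))) := by
    rw [Complex.exp_eq_exp_ℂ]
    exact NormedSpace.expSeries_div_hasSum_exp (-(c * s))
  have hsum : Summable fun q : ℕ × ℕ => f q.1 * g q.2 :=
    summable_mul_of_summable_norm (NormedSpace.norm_expSeries_div_summable (c * t))
      (NormedSpace.norm_expSeries_div_summable (-(c * s)))
  clear_value c t s f g
  have hexp : Complex.exp (c * t) * Complex.exp (-(c * s)) =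
      Complex.exp (Complex.I * x * (Real.sin θ : ℝ)) := by
    rw [← Complex.exp_add]
    congr 1
    have hsin : (Real.sin θ : ℂ) = Complex.sin θ := Complex.ofReal_sin θ
    rw [hsin, Complex.sin, ht, hs, hc]
    ring_nf
    rw [Complex.I_sq]
    ring
  have hF : HasSum (fun q : ℕ × ℕ => f q.1 * g q.2)
      (Complex.exp (Complex.I * x * (Real.sin θ : ℝ))) := by
    rw [← hexp]; exact hfs.mul hgs hsum
  -- transport along the equivalence
  have hE : HasSum (fun p : ℤ × ℕ => f (jaEquiv p).1 * g (jaEquiv p).2)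
      (Complex.exp (Complex.I * x * (Real.sin θ : ℝ))) :=
    ((Equiv.hasSum_iff (f := fun q : ℕ × ℕ => f q.1 * g q.2)
      (a := Complex.exp (Complex.I * x * (Real.sin θ : ℝ))) jaEquiv).mpr hF)
  have hslice : ∀ n : ℤ, Summable fun m : ℕ => f (jaEquiv (n, m)).1 * g (jaEquiv (n, m)).2 :=
    fun n => hE.summable.prod_factor n
  have hfact : ∀ m : ℕ, ((m.factorial : ℂ)) ≠ 0 := fun m =>
    Nat.cast_ne_zero.mpr m.factorial_ne_zero
  have hmain : ∀ n : ℤ, (∑' m : ℕ, f (jaEquiv (n, m)).1 * g (jaEquiv (n, m)).2)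
      = besselJ n x * Complex.exp (Complex.I * (n : ℂ) * (θ : ℂ)) := by
    intro n
    by_cases hn : 0 ≤ n
    · set a : ℕ := n.toNat with ha
      have hterm : ∀ m : ℕ, f (jaEquiv (n, m)).1 * g (jaEquiv (n, m)).2
          = ((-1 : ℂ) ^ m / ((m.factorial : ℂ) * ((m + a).factorial : ℂ))
              * c ^ (2 * m + a)) * t ^ a := by
        intro m
        have hEeq : jaEquiv (n, m) = (m + a, m) := by
          simp [jaEquiv, hn, ha]
        rw [hEeq]
        simp only [hf, hg]
        have hpow : (c * t) ^ (m + a) * (-(c * s)) ^ m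
            = (-1 : ℂ) ^ m * c ^ (2 * m + a) * t ^ a := by
          have h1 : (c * t) ^ (m + a) * (-(c * s)) ^ m
              = (-1 : ℂ) ^ m * (c ^ (m + a) * c ^ m) * ((t * s) ^ m * t ^ a) := by ring
          rw [h1, hts, one_pow, one_mul, ← pow_add c,
            show m + a + m = 2 * m + a from by omega]
        rw [div_mul_div_comm, hpow]
        simp only [div_eq_mul_inv, mul_inv]
        ring
      have hbj : besselJ n x = besselJNat a x := by rw [besselJ, if_pos hn]
      have hna : ((a : ℕ) : ℂ) = (n : ℂ) := by
        exact_mod_cast congrArg (Int.cast : ℤ → ℂ) (Int.toNat_of_nonneg hn)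
      have hexpn : Complex.exp (Complex.I * (n : ℂ) * (θ : ℂ)) = t ^ a := by
        rw [← hna, show Complex.I * ((a : ℕ) : ℂ) * (θ : ℂ)
          = ((a : ℕ) : ℂ) * (Complex.I * θ) by ring, Complex.exp_nat_mul, ht]
      rw [tsum_congr hterm, tsum_mul_right, hbj, hexpn, besselJNat, hc]
    · set b : ℕ := n.natAbs with hb
      have hterm : ∀ m : ℕ, f (jaEquiv (n, m)).1 * g (jaEquiv (n, m)).2
          = ((-1 : ℂ) ^ b * ((-1 : ℂ) ^ m / ((m.factorial : ℂ) * ((m + b).factorial : ℂ))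
              * c ^ (2 * m + b))) * s ^ b := by
        intro m
        have hEeq : jaEquiv (n, m) = (m, m + b) := by
          simp [jaEquiv, hn, hb]
        rw [hEeq]
        simp only [hf, hg]
        have hpow : (c * t) ^ m * (-(c * s)) ^ (m + b)
            = (-1 : ℂ) ^ b * ((-1 : ℂ) ^ m * c ^ (2 * m + b)) * s ^ b := by
          have h1 : (c * t) ^ m * (-(c * s)) ^ (m + b)
              = ((-1 : ℂ) ^ b * (-1 : ℂ) ^ m) * (c ^ m * c ^ (m + b))
                  * ((t * s) ^ m * s ^ b) := by ring
          rw [h1, hts, one_pow, ← pow_add c,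
            show m + (m + b) = 2 * m + b from by omega]
          ring
        rw [div_mul_div_comm, hpow]
        simp only [div_eq_mul_inv, mul_inv]
        ring
      have hbj : besselJ n x = (-1 : ℂ) ^ b * besselJNat b x := by
        rw [besselJ, if_neg hn]
      have hnb : (n : ℂ) = -((b : ℕ) : ℂ) := by
        exact_mod_cast congrArg (Int.cast : ℤ → ℂ) (by omega : n = -((b : ℕ) : ℤ))
      have hexpn : Complex.exp (Complex.I * (n : ℂ) * (θ : ℂ)) = s ^ b := by
        rw [hnb, show Complex.I * -((b : ℕ) : ℂ) * (θ : ℂ)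
          = ((b : ℕ) : ℂ) * -(Complex.I * θ) by ring, Complex.exp_nat_mul, hs]
      calc (∑' m : ℕ, f (jaEquiv (n, m)).1 * g (jaEquiv (n, m)).2)
          = ∑' m : ℕ, ((-1 : ℂ) ^ b * ((-1 : ℂ) ^ m
              / ((m.factorial : ℂ) * ((m + b).factorial : ℂ)) * c ^ (2 * m + b))) * s ^ b :=
            tsum_congr hterm
        _ = (∑' m : ℕ, (-1 : ℂ) ^ b * ((-1 : ℂ) ^ m
              / ((m.factorial : ℂ) * ((m + b).factorial : ℂ)) * c ^ (2 * m + b))) * s ^ b := by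
            rw [tsum_mul_right]
        _ = ((-1 : ℂ) ^ b * ∑' m : ℕ, (-1 : ℂ) ^ m
              / ((m.factorial : ℂ) * ((m + b).factorial : ℂ)) * c ^ (2 * m + b)) * s ^ b := by
            rw [tsum_mul_left]
        _ = besselJ n x * Complex.exp (Complex.I * (n : ℂ) * (θ : ℂ)) := by
            rw [hbj, hexpn, besselJNat, hc]
  exact hE.prod_fiberwise fun n => (hmain n) ▸ (hslice n).hasSum
end

section
/- For every complex number x, ∑_{ν ∈ ℤ} J_{3ν}(x) = (1/3)[1 + 2 cos(x√3/2)]. -/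
open scoped Real

lemma expHasSum (z : ℂ) : HasSum (fun n : ℕ => z ^ n / n.factorial) (Complex.exp z) := by
  rw [Complex.exp_eq_exp_ℂ]
  exact NormedSpace.expSeries_div_hasSum_exp z

lemma norm_summable' (z : ℂ) : Summable (fun n : ℕ => ‖z ^ n / (n.factorial : ℂ)‖) :=
  NormedSpace.norm_expSeries_div_summable z

lemma besselJ_hasSum (x t : ℂ) (ht : t ≠ 0) :
    HasSum (fun n : ℤ => besselJ n x * t ^ n)
      (Complex.exp (x * t / 2) * Complex.exp (-x / (2 * t))) := by
  set A : ℕ → ℂ := fun j => (x * t / 2) ^ j / j.factorial with hA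
  set B : ℕ → ℂ := fun k => (-x / (2 * t)) ^ k / k.factorial with hB
  have hsum : Summable fun p : ℕ × ℕ => A p.1 * B p.2 :=
    summable_mul_of_summable_norm (norm_summable' _) (norm_summable' _)
  have hprod : HasSum (fun p : ℕ × ℕ => A p.1 * B p.2)
      (Complex.exp (x * t / 2) * Complex.exp (-x / (2 * t))) :=
    (expHasSum _).mul (expHasSum _) hsum
  have key := hprod.tsum_fiberwise (fun p : ℕ × ℕ => (p.1 : ℤ) - p.2)
  have hfib : ∀ n : ℤ,
      (∑' p : (fun p : ℕ × ℕ => (p.1 : ℤ) - (p.2 : ℤ)) ⁻¹' {n}, A (p : ℕ × ℕ).1 * B (p : ℕ × ℕ).2)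
        = besselJ n x * t ^ n := by
    intro n
    rcases le_or_gt 0 n with hn | hn
    · obtain ⟨N, rfl⟩ : ∃ N : ℕ, n = (N : ℤ) := ⟨n.toNat, (Int.toNat_of_nonneg hn).symm⟩
      let e : ℕ ≃ ((fun p : ℕ × ℕ => (p.1 : ℤ) - (p.2 : ℤ)) ⁻¹' {(N : ℤ)}) :=
        { toFun := fun k => ⟨(N + k, k), by
            simp only [Set.mem_preimage, Set.mem_singleton_iff]; push_cast; ring⟩
          invFun := fun p => (p : ℕ × ℕ).2
          left_inv := fun k => rfl
          right_inv := fun p => by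
            obtain ⟨⟨j, k⟩, hp⟩ := p
            simp only [Set.mem_preimage, Set.mem_singleton_iff] at hp
            have : j = N + k := by omega
            subst this; rfl }
      rw [← e.tsum_eq]
      have hterm : ∀ k : ℕ, A (e k : ℕ × ℕ).1 * B (e k : ℕ × ℕ).2
          = ((-1 : ℂ) ^ k / ((k.factorial : ℂ) * ((k + N).factorial : ℂ)) * (x / 2) ^ (2 * k + N)) * t ^ N := by
        intro k
        show A (N + k) * B k = _
        simp only [hA, hB]
        have hfac1 : (((N + k).factorial : ℂ)) ≠ 0 := Nat.cast_ne_zero.2 (Nat.factorial_ne_zero _)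
        have hfac2 : ((k.factorial : ℂ)) ≠ 0 := Nat.cast_ne_zero.2 (Nat.factorial_ne_zero _)
        rw [show k + N = N + k from Nat.add_comm _ _]
        field_simp
        have htk : t ^ k * t⁻¹ ^ k = 1 := by rw [← mul_pow, mul_inv_cancel₀ ht, one_pow]
        have hneg : ∀ n : ℕ, (-1 / 2 : ℂ) ^ n = (-1) ^ n * (1 / 2) ^ n := fun n => by
          rw [← mul_pow]; norm_num
        linear_combination (x ^ N * x ^ (k * 2) * t ^ N * (-1 / 2 : ℂ) ^ k * (1 / 2 : ℂ) ^ N * (1 / 2 : ℂ) ^ k) * htk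
          + (x ^ N * x ^ (k * 2) * t ^ N * (1 / 2 : ℂ) ^ N * (1 / 2 : ℂ) ^ k) * hneg k
      rw [tsum_congr hterm, tsum_mul_right]
      have : besselJ (N : ℤ) x = besselJNat N x := by
        simp [besselJ, Int.toNat_natCast]
      rw [this, besselJNat, zpow_natCast]
    · obtain ⟨M, rfl⟩ : ∃ M : ℕ, n = -(M : ℤ) := by
        refine ⟨n.natAbs, ?_⟩
        omega
      have hM : 0 < M := by omega
      let e : ℕ ≃ ((fun p : ℕ × ℕ => (p.1 : ℤ) - (p.2 : ℤ)) ⁻¹' {(-(M : ℤ))}) :=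
        { toFun := fun j => ⟨(j, j + M), by
            simp only [Set.mem_preimage, Set.mem_singleton_iff]; push_cast; ring⟩
          invFun := fun p => (p : ℕ × ℕ).1
          left_inv := fun j => rfl
          right_inv := fun p => by
            obtain ⟨⟨j, k⟩, hp⟩ := p
            simp only [Set.mem_preimage, Set.mem_singleton_iff] at hp
            have : k = j + M := by omega
            subst this; rfl }
      rw [← e.tsum_eq]
      have hterm : ∀ j : ℕ, A (e j : ℕ × ℕ).1 * B (e j : ℕ × ℕ).2
          = (((-1 : ℂ) ^ M) * ((-1 : ℂ) ^ j / ((j.factorial : ℂ) * ((j + M).factorial : ℂ)) * (x / 2) ^ (2 * j + M))) * (t ^ M)⁻¹ := by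
        intro j
        show A j * B (j + M) = _
        simp only [hA, hB]
        have hfac1 : (((j + M).factorial : ℂ)) ≠ 0 := Nat.cast_ne_zero.2 (Nat.factorial_ne_zero _)
        have hfac2 : ((j.factorial : ℂ)) ≠ 0 := Nat.cast_ne_zero.2 (Nat.factorial_ne_zero _)
        field_simp
        have htk : (t ^ j * t⁻¹ ^ j) * (t ^ M * t⁻¹ ^ M) = 1 := by
          rw [← mul_pow, ← mul_pow, mul_inv_cancel₀ ht, one_pow, one_pow, one_mul]
        have hneg : ∀ n : ℕ, (-1 / 2 : ℂ) ^ n = (-1) ^ n * (1 / 2) ^ n := fun n => by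
          rw [← mul_pow]; norm_num
        linear_combination (x ^ (j * 2) * x ^ M * (-1 / 2 : ℂ) ^ j * (-1 / 2 : ℂ) ^ M * (1 / 2 : ℂ) ^ j) * htk
          + (x ^ (j * 2) * x ^ M * (1 / 2 : ℂ) ^ j * (-1 / 2 : ℂ) ^ M) * hneg j
          + (x ^ (j * 2) * x ^ M * (1 / 2 : ℂ) ^ j * ((-1 : ℂ) ^ j * (1 / 2 : ℂ) ^ j)) * hneg M
      rw [tsum_congr hterm, tsum_mul_right, tsum_mul_left]
      have h1 : besselJ (-(M : ℤ)) x = (-1 : ℂ) ^ M * besselJNat M x := by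
        have : ¬ (0 ≤ -(M : ℤ)) := by omega
        simp [besselJ, this, Int.natAbs_neg]
        exact fun h => absurd h (by omega)
      have h2 : t ^ (-(M : ℤ)) = (t ^ M)⁻¹ := by
        rw [zpow_neg, zpow_natCast]
      rw [h1, h2, besselJNat]
  have : (fun n : ℤ => ∑' p : (fun p : ℕ × ℕ => (p.1 : ℤ) - (p.2 : ℤ)) ⁻¹' {n},
      A (p : ℕ × ℕ).1 * B (p : ℕ × ℕ).2) = fun n => besselJ n x * t ^ n := funext hfib
  rwa [this] at key

noncomputable def om : ℂ := (-1 + Complex.I * (Real.sqrt 3 : ℝ)) / 2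

lemma s_sq : ((Real.sqrt 3 : ℝ) : ℂ)^2 = 3 := by
  rw [← Complex.ofReal_pow, Real.sq_sqrt (by norm_num : (0:ℝ) ≤ 3)]
  norm_num

lemma om_cube : om ^ 3 = 1 := by
  have hI := Complex.I_sq
  have h3 := s_sq
  unfold om
  set s : ℂ := ((Real.sqrt 3 : ℝ) : ℂ)
  linear_combination ((3 - Complex.I * s) / 8) * h3 + ((-3 * s^2 + Complex.I * s^3) / 8) * hI

lemma om_ne : om ≠ 0 := by
  intro h
  have := om_cube
  rw [h] at this
  simp at this

lemma om_sum : 1 + om + om ^ 2 = 0 := by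
  have hI := Complex.I_sq
  have h3 := s_sq
  unfold om
  set s : ℂ := ((Real.sqrt 3 : ℝ) : ℂ)
  linear_combination (-1/4 : ℂ) * h3 + (s^2/4) * hI

lemma om_inv : om⁻¹ = om ^ 2 := by
  exact (inv_eq_of_mul_eq_one_right (by rw [← pow_succ']; exact om_cube))

lemma om_sub : om - om⁻¹ = Complex.I * (Real.sqrt 3 : ℝ) := by
  rw [om_inv]
  have hI := Complex.I_sq
  have h3 := s_sq
  unfold om
  set s : ℂ := ((Real.sqrt 3 : ℝ) : ℂ)
  linear_combination (1/4 : ℂ) * h3 + (-(s^2)/4) * hI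

lemma om_coeff (n : ℤ) : 1 + om ^ n + (om⁻¹) ^ n = if (3:ℤ) ∣ n then 3 else 0 := by
  obtain ⟨q, r, hr0, hr3, rfl⟩ : ∃ q r : ℤ, 0 ≤ r ∧ r < 3 ∧ n = 3 * q + r :=
    ⟨n / 3, n % 3, by omega, by omega, by omega⟩
  have hkey : ∀ m : ℤ, om ^ (3 * q + m) = om ^ m := by
    intro m
    rw [zpow_add₀ om_ne, zpow_mul, zpow_ofNat, om_cube, one_zpow, one_mul]
  have hinv3 : (om⁻¹) ^ (3*q+r) = (om⁻¹) ^ r := by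
    rw [inv_zpow, inv_zpow, hkey]
  rw [hkey, hinv3]
  interval_cases r
  · simp [om_ne]
    norm_num
  · have : ¬ ((3:ℤ) ∣ 3 * q + 1) := by omega
    simp only [this, if_false]
    rw [zpow_one, zpow_one, om_inv]
    linear_combination om_sum
  · have : ¬ ((3:ℤ) ∣ 3 * q + 2) := by omega
    simp only [this, if_false]
    have h2 : om ^ (2:ℤ) = om ^ (2:ℕ) := by norm_cast
    have hi2 : (om⁻¹) ^ (2:ℤ) = om := by
      rw [← zpow_neg_one, ← zpow_mul]
      have : om ^ ((-1) * 2 : ℤ) = (om ^ (2:ℕ))⁻¹ := by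
        rw [show ((-1) * 2 : ℤ) = -(2:ℕ) by norm_num, zpow_neg, zpow_natCast]
      rw [this, ← om_inv, inv_inv]
    rw [h2, hi2]
    linear_combination om_sum

theorem stmt_5 (x : ℂ) :
    ∑' ν : ℤ, besselJ (3 * ν) x
      = (1 / 3) * (1 + 2 * Complex.cos (x * (Real.sqrt 3 : ℝ) / 2)) := by
  classical
  set s : ℂ := ((Real.sqrt 3 : ℝ) : ℂ) with hs
  have h1 := besselJ_hasSum x 1 one_ne_zero
  have h2 := besselJ_hasSum x om om_ne
  have h3 := besselJ_hasSum x om⁻¹ (inv_ne_zero om_ne)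
  have v1 : Complex.exp (x * 1 / 2) * Complex.exp (-x / (2 * 1)) = 1 := by
    rw [← Complex.exp_add, show x * 1 / 2 + -x / (2 * 1) = 0 by ring, Complex.exp_zero]
  have v2 : Complex.exp (x * om / 2) * Complex.exp (-x / (2 * om))
      = Complex.exp (x * (Complex.I * s) / 2) := by
    rw [← Complex.exp_add]
    congr 1
    rw [← om_sub]
    field_simp [om_ne]
    ring
  have v3 : Complex.exp (x * om⁻¹ / 2) * Complex.exp (-x / (2 * om⁻¹))
      = Complex.exp (-(x * (Complex.I * s) / 2)) := by
    rw [← Complex.exp_add]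
    congr 1
    have : om⁻¹ - (om⁻¹)⁻¹ = -(Complex.I * s) := by
      rw [inv_inv]
      rw [← om_sub]
      ring
    rw [show -(x * (Complex.I * s) / 2) = x * (om⁻¹ - (om⁻¹)⁻¹) / 2 from by rw [this]; ring]
    field_simp [om_ne]
    ring
  rw [v1] at h1
  rw [v2] at h2
  rw [v3] at h3
  have hsum3 := ((h1.add h2).add h3).div_const 3
  have hfun : (fun n : ℤ => (besselJ n x * (1:ℂ) ^ n + besselJ n x * om ^ n
        + besselJ n x * (om⁻¹) ^ n) / 3)
      = fun n : ℤ => if (3:ℤ) ∣ n then besselJ n x else 0 := by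
    funext n
    rw [one_zpow, mul_one,
      show besselJ n x + besselJ n x * om ^ n + besselJ n x * (om⁻¹) ^ n
        = besselJ n x * (1 + om ^ n + (om⁻¹) ^ n) from by ring, om_coeff]
    by_cases h : (3:ℤ) ∣ n
    · rw [if_pos h, if_pos h]
      ring
    · rw [if_neg h, if_neg h]
      ring
  rw [hfun] at hsum3
  have hrange : ∑' ν : ℤ, besselJ (3 * ν) x
      = ∑' n : ℤ, (if (3:ℤ) ∣ n then besselJ n x else 0) := by
    have hinj : Function.Injective (fun ν : ℤ => 3 * ν) := by
      intro a b hab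
      simpa using hab
    have hsupp : Function.support (fun n : ℤ => if (3:ℤ) ∣ n then besselJ n x else 0)
        ⊆ Set.range (fun ν : ℤ => 3 * ν) := by
      intro n hn
      simp only [Function.mem_support, ne_eq] at hn
      by_cases h : (3:ℤ) ∣ n
      · obtain ⟨c, rfl⟩ := h
        exact ⟨c, rfl⟩
      · exact absurd (if_neg h) hn
    have := Function.Injective.tsum_eq hinj hsupp
    rw [← this]
    apply tsum_congr
    intro ν
    have hd : (3:ℤ) ∣ 3 * ν := ⟨ν, rfl⟩
    simp only [hd, if_true]
  rw [hrange, hsum3.tsum_eq]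
  have hcos : Complex.cos (x * s / 2)
      = (Complex.exp (x * (Complex.I * s) / 2) + Complex.exp (-(x * (Complex.I * s) / 2))) / 2 := by
    simp only [Complex.cos]
    congr 2
    · ring
    · ring
  rw [show x * (Real.sqrt 3 : ℝ) / 2 = x * s / 2 from rfl, hcos]
  ring
end

section
/- For every complex number x and every integer p, ∑_{ν ∈ ℤ} J_{3ν+p}(x) = (1/3)[1 + 2 cos(x√3/2 − 2πp/3)]. -/
open scoped Real
open Complex

namespace BesselAux

noncomputable def G (x : ℂ) (n : ℤ) (m : ℕ) : ℂ :=
  if 0 ≤ (m : ℤ) + n then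
    (-1 : ℂ) ^ m / ((m.factorial : ℂ) * ((((m : ℤ) + n).toNat).factorial : ℂ))
      * (x / 2) ^ (m + ((m : ℤ) + n).toNat)
  else 0

lemma besselJ_eq (x : ℂ) (n : ℤ) : besselJ n x = ∑' m : ℕ, G x n m := by
  rcases le_or_gt 0 n with hn | hn
  · rw [besselJ, if_pos hn, besselJNat]
    refine tsum_congr fun m => ?_
    have h1 : (((m:ℤ) + n).toNat) = m + n.toNat := by omega
    have h2 : m + (m + n.toNat) = 2 * m + n.toNat := by omega
    rw [G, if_pos (by positivity), h1, h2]
  · rw [besselJ, if_neg (not_le.mpr hn)]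
    set a := n.natAbs with ha
    have hna : n = -(a : ℤ) := by omega
    have hinj : Function.Injective (fun k : ℕ => k + a) := fun i j h => by simpa using h
    have hsupp : ∀ m ∉ Set.range (fun k : ℕ => k + a), G x n m = 0 := by
      intro m hm
      have : (m : ℤ) + n < 0 := by
        simp only [Set.mem_range, not_exists] at hm
        have := hm (m - a)
        omega
      rw [G, if_neg (not_le.mpr this)]
    rw [← hinj.tsum_eq (f := G x n) (by intro m hm; exact not_imp_comm.mp (hsupp m) hm)]
    rw [besselJNat, ← tsum_mul_left]
    refine tsum_congr fun k => ?_
    have h1 : ((k + a : ℕ) : ℤ) + n = (k : ℤ) := by omega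
    have h2 : (((k + a : ℕ) : ℤ) + n).toNat = k := by omega
    simp only [G, h1, h2, Int.toNat_natCast, if_pos (Int.ofNat_nonneg k)]
    rw [pow_add (-1 : ℂ) k a]
    have : 2 * k + a = (k + a) + k := by omega
    rw [this]
    ring

end BesselAux

namespace BesselAux2
open BesselAux

noncomputable def H (x t : ℂ) (q : ℤ × ℕ) : ℂ := G x q.1 q.2 * t ^ q.1

def e (jk : ℕ × ℕ) : ℤ × ℕ := ((jk.1 : ℤ) - jk.2, jk.2)

lemma e_inj : Function.Injective e := by
  rintro ⟨j, k⟩ ⟨j', k'⟩ h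
  simp only [e, Prod.mk.injEq] at h ⊢
  omega

lemma H_off_range (x t : ℂ) {q : ℤ × ℕ} (hq : q ∉ Set.range e) : H x t q = 0 := by
  obtain ⟨n, m⟩ := q
  have : (m : ℤ) + n < 0 := by
    by_contra h
    exact hq ⟨((m + n).toNat, m), by simp [e]; omega⟩
  simp [H, G, not_le.mpr this]

lemma H_comp (x t : ℂ) (ht : t ≠ 0) (jk : ℕ × ℕ) :
    H x t (e jk) = ((x / 2 * t) ^ jk.1 / jk.1.factorial) *
      ((-(x / 2) * t⁻¹) ^ jk.2 / jk.2.factorial) := by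
  obtain ⟨j, k⟩ := jk
  have h1 : (k : ℤ) + ((j : ℤ) - k) = (j : ℤ) := by ring
  have h2 : ((j : ℤ)).toNat = j := rfl
  simp only [H, e, G, h1]
  rw [if_pos (Int.ofNat_nonneg j), h2]
  rw [zpow_sub₀ ht, zpow_natCast, zpow_natCast]
  field_simp
  have hT : t ^ k * t⁻¹ ^ k = 1 := by rw [← mul_pow, mul_inv_cancel₀ ht, one_pow]
  rw [show -(x / (2 * t)) = (-1) * (x / 2) * t⁻¹ by ring, mul_pow, mul_pow, pow_add]
  linear_combination (-((x * t / 2) ^ j * (-1) ^ k * (x / 2) ^ k / (↑k.factorial * ↑j.factorial))) * hT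

lemma summable_norm_H (x t : ℂ) (ht : t ≠ 0) : Summable fun q => ‖H x t q‖ := by
  rw [← (e_inj.summable_iff (f := fun q => ‖H x t q‖)
    (fun q hq => by beta_reduce; rw [H_off_range x t hq, norm_zero]))]
  have : (fun q => ‖H x t q‖) ∘ e = fun jk : ℕ × ℕ =>
      (‖x / 2 * t‖ ^ jk.1 / jk.1.factorial) * (‖-(x / 2) * t⁻¹‖ ^ jk.2 / jk.2.factorial) := by
    funext jk
    simp only [Function.comp_apply, H_comp x t ht, norm_mul, norm_div, norm_pow,
      Complex.norm_natCast]
  rw [this]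
  exact Summable.mul_of_nonneg (f := fun j : ℕ => ‖x / 2 * t‖ ^ j / j.factorial)
    (g := fun k : ℕ => ‖-(x / 2) * t⁻¹‖ ^ k / k.factorial)
    (Real.summable_pow_div_factorial _) (Real.summable_pow_div_factorial _)
    (fun j => by positivity) (fun k => by positivity)

lemma summable_H (x t : ℂ) (ht : t ≠ 0) : Summable (H x t) := (summable_norm_H x t ht).of_norm

lemma tsum_H (x t : ℂ) (ht : t ≠ 0) :
    ∑' q, H x t q = Complex.exp (x / 2 * (t - t⁻¹)) := by
  rw [← e_inj.tsum_eq (f := H x t)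
    (fun q hq => by by_contra h; exact (Function.mem_support.mp hq) (H_off_range x t (by simpa using h)))]
  have step : ∑' jk : ℕ × ℕ, H x t (e jk)
      = (∑' j : ℕ, (x / 2 * t) ^ j / j.factorial) * (∑' k : ℕ, (-(x / 2) * t⁻¹) ^ k / k.factorial) := by
    rw [tsum_mul_tsum_of_summable_norm (f := fun j : ℕ => (x / 2 * t) ^ j / j.factorial)
      (g := fun k : ℕ => (-(x / 2) * t⁻¹) ^ k / k.factorial)
      (by simpa using Real.summable_pow_div_factorial ‖x / 2 * t‖)
      (by simpa using Real.summable_pow_div_factorial ‖-(x / 2) * t⁻¹‖)]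
    exact tsum_congr fun jk => H_comp x t ht jk
  have hexp : ∀ z : ℂ, ∑' n : ℕ, z ^ n / n.factorial = Complex.exp z := by
    intro z
    rw [Complex.exp_eq_exp_ℂ, NormedSpace.exp_eq_tsum_div]
  rw [step, hexp, hexp, ← Complex.exp_add]
  ring_nf

lemma fiber (x t : ℂ) (n : ℤ) : ∑' m : ℕ, H x t (n, m) = besselJ n x * t ^ n := by
  rw [besselJ_eq x n, ← tsum_mul_right]
  rfl

lemma summable_norm_bessel (x t : ℂ) (ht : t ≠ 0) :
    Summable fun n : ℤ => ‖besselJ n x * t ^ n‖ := by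
  have h0 := summable_norm_H x t ht
  have h1 : Summable fun n : ℤ => ∑' m : ℕ, ‖H x t (n, m)‖ :=
    ((summable_prod_of_nonneg (fun q => norm_nonneg _)).mp h0).2
  refine h1.of_nonneg_of_le (fun n => norm_nonneg _) fun n => ?_
  rw [← fiber x t n]
  exact norm_tsum_le_tsum_norm (h0.prod_factor n)

lemma tsum_bessel (x t : ℂ) (ht : t ≠ 0) :
    ∑' n : ℤ, besselJ n x * t ^ n = Complex.exp (x / 2 * (t - t⁻¹)) := by
  rw [← tsum_H x t ht, Summable.tsum_prod (summable_H x t ht)]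
  exact tsum_congr fun n => (fiber x t n).symm

end BesselAux2

namespace Omega3

noncomputable def ω : ℂ := Complex.exp (2 * ↑π * I / 3)

lemma ω_ne : ω ≠ 0 := Complex.exp_ne_zero _

lemma ω_cube : ω ^ (3 : ℕ) = 1 := by
  rw [ω, ← Complex.exp_nat_mul]
  rw [show (3 : ℕ) * (2 * (π:ℂ) * I / 3) = 2 * π * I by push_cast; ring]
  exact Complex.exp_two_pi_mul_I

lemma ω_zpow_three_mul (d : ℤ) : ω ^ (3 * d) = 1 := by
  rw [zpow_mul, show (3 : ℤ) = ((3 : ℕ) : ℤ) by norm_num, zpow_natCast, ω_cube, one_zpow]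

lemma ω_sq_zpow (d : ℤ) : (ω ^ 2) ^ d = (ω ^ d) ^ 2 := by
  rw [← zpow_natCast ω 2, ← zpow_mul, ← zpow_natCast (ω ^ d) 2, ← zpow_mul, mul_comm]

lemma ω_zpow_eq_one_iff (d : ℤ) : ω ^ d = 1 ↔ (3 : ℤ) ∣ d := by
  constructor
  · intro h
    rw [ω, ← Complex.exp_int_mul] at h
    obtain ⟨k, hk⟩ := Complex.exp_eq_one_iff.mp h
    have h2 : (2 * (π:ℂ) * I) ≠ 0 := by
      simp [Complex.I_ne_zero, Real.pi_ne_zero, Complex.ofReal_ne_zero]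
    have : (d : ℂ) * (2 * π * I) = (3 * k : ℤ) * (2 * π * I) := by
      push_cast
      linear_combination 3 * hk
    have := mul_right_cancel₀ h2 this
    have hd : d = 3 * k := by exact_mod_cast this
    exact ⟨k, hd⟩
  · rintro ⟨k, rfl⟩
    exact ω_zpow_three_mul k

lemma cube_root_sum {d : ℤ} (hd : ¬ (3:ℤ) ∣ d) : 1 + ω ^ d + (ω ^ d) ^ 2 = 0 := by
  have hu3 : (ω ^ d) ^ (3:ℕ) = 1 := by
    rw [← zpow_natCast (ω ^ d), ← zpow_mul, mul_comm,
      show ((3:ℕ):ℤ) * d = 3 * d by push_cast; ring, ω_zpow_three_mul]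
  have hu1 : ω ^ d ≠ 1 := fun h => hd ((ω_zpow_eq_one_iff d).mp h)
  have hfac : (ω ^ d - 1) * (1 + ω ^ d + (ω ^ d) ^ 2) = 0 := by
    have : (ω ^ d - 1) * (1 + ω ^ d + (ω ^ d) ^ 2) = (ω ^ d) ^ (3:ℕ) - 1 := by ring
    rw [this, hu3, sub_self]
  rcases mul_eq_zero.mp hfac with h | h
  · exact absurd (sub_eq_zero.mp h) hu1
  · exact h

lemma exp_sub (z : ℂ) : Complex.exp (z * I) - Complex.exp (-z * I) = 2 * Complex.sin z * I := by
  have h : 2 * Complex.sin z * I = (Complex.exp (-z * I) - Complex.exp (z * I)) * (I * I) := by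
    rw [Complex.sin]; ring
  rw [h, Complex.I_mul_I]; ring

lemma ω_diff : ω - ω⁻¹ = (Real.sqrt 3 : ℂ) * I := by
  have h1 : ω = Complex.exp (((2 * π / 3 : ℝ) : ℂ) * I) := by
    rw [ω]; push_cast; ring_nf
  have h2 : ω⁻¹ = Complex.exp (-((2 * π / 3 : ℝ) : ℂ) * I) := by
    rw [h1, ← Complex.exp_neg]; ring_nf
  rw [h2, h1, exp_sub, ← Complex.ofReal_sin, show (2 * π / 3 : ℝ) = π - π / 3 by ring,
    Real.sin_pi_sub, Real.sin_pi_div_three]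
  push_cast; ring

lemma ω_sq_eq_inv : ω ^ 2 = ω⁻¹ := by
  refine eq_inv_of_mul_eq_one_left ?_
  rw [← pow_succ]
  exact ω_cube

end Omega3

lemma Omega3.ω_zpow (k : ℤ) : Omega3.ω ^ k = Complex.exp ((k : ℂ) * (2 * ↑π * I / 3)) :=
  (Complex.exp_int_mul _ _).symm

open Omega3 BesselAux2

theorem stmt_6 (x : ℂ) (p : ℤ) :
    ∑' ν : ℤ, besselJ (3 * ν + p) x
      = (1 / 3) * (1 + 2 * Complex.cos (x * (Real.sqrt 3 : ℝ) / 2 - 2 * (π : ℂ) * (p : ℂ) / 3)) := by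
  classical
  have hω2 : (ω ^ 2 : ℂ) ≠ 0 := pow_ne_zero _ ω_ne
  set f : ℤ → ℂ := fun n => (1 / 3 : ℂ) * (besselJ n x * (1 : ℂ) ^ n)
      + (ω ^ (-p) / 3) * (besselJ n x * ω ^ n)
      + (ω ^ (-(2 * p)) / 3) * (besselJ n x * (ω ^ 2) ^ n) with hf
  have hf_alt : ∀ n : ℤ, f n = besselJ n x * ((1 + ω ^ (n - p) + (ω ^ 2) ^ (n - p)) / 3) := by
    intro n
    have e1 : ω ^ (n - p) = ω ^ n * ω ^ (-p) := by rw [sub_eq_add_neg, zpow_add₀ ω_ne]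
    have e2 : (ω ^ 2) ^ (n - p) = (ω ^ 2) ^ n * ω ^ (-(2 * p)) := by
      rw [sub_eq_add_neg, zpow_add₀ hω2]
      congr 1
      rw [ω_sq_zpow (-p), ← zpow_natCast (ω ^ (-p)) 2, ← zpow_mul]
      congr 1
      push_cast
      ring
    simp only [hf, one_zpow, e1, e2]
    ring
  have hrange : ∀ ν : ℤ, f (3 * ν + p) = besselJ (3 * ν + p) x := by
    intro ν
    rw [hf_alt, show 3 * ν + p - p = 3 * ν by ring, ω_zpow_three_mul, ω_sq_zpow,
      ω_zpow_three_mul]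
    norm_num
  have hoff : ∀ n : ℤ, n ∉ Set.range (fun ν : ℤ => 3 * ν + p) → f n = 0 := by
    intro n hn
    have hd : ¬ (3 : ℤ) ∣ (n - p) := by
      rintro ⟨k, hk⟩
      exact hn ⟨k, show 3 * k + p = n by omega⟩
    rw [hf_alt, ω_sq_zpow, cube_root_sum hd]
    norm_num
  have hinj : Function.Injective (fun ν : ℤ => 3 * ν + p) := by
    intro a b h
    simp only [] at h
    omega
  have s1 : Summable fun n : ℤ => besselJ n x * (1 : ℂ) ^ n :=
    (summable_norm_bessel x 1 one_ne_zero).of_norm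
  have s2 : Summable fun n : ℤ => besselJ n x * ω ^ n :=
    (summable_norm_bessel x ω ω_ne).of_norm
  have s3 : Summable fun n : ℤ => besselJ n x * (ω ^ 2) ^ n :=
    (summable_norm_bessel x (ω ^ 2) hω2).of_norm
  have hLHS : ∑' ν : ℤ, besselJ (3 * ν + p) x = ∑' n : ℤ, f n := by
    rw [← hinj.tsum_eq (f := f) (fun n hn => by
      by_contra h
      exact (Function.mem_support.mp hn) (hoff n (by simpa using h)))]
    exact tsum_congr fun ν => (hrange ν).symm
  rw [hLHS]
  simp only [hf]
  rw [Summable.tsum_add ((s1.mul_left _).add (s2.mul_left _)) (s3.mul_left _),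
      Summable.tsum_add (s1.mul_left _) (s2.mul_left _),
      tsum_mul_left, tsum_mul_left, tsum_mul_left,
      tsum_bessel x 1 one_ne_zero, tsum_bessel x ω ω_ne, tsum_bessel x (ω ^ 2) hω2]
  rw [show x / 2 * ((1 : ℂ) - 1⁻¹) = 0 by norm_num, Complex.exp_zero]
  rw [show x / 2 * (ω - ω⁻¹) = (x * (Real.sqrt 3 : ℝ) / 2) * I by rw [ω_diff]; ring]
  rw [show x / 2 * (ω ^ 2 - (ω ^ 2)⁻¹) = -((x * (Real.sqrt 3 : ℝ) / 2) * I) by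
    rw [ω_sq_eq_inv, inv_inv]; linear_combination (-(x / 2)) * ω_diff]
  rw [show (-(2 * p) : ℤ) = p + 3 * (-p) by ring, zpow_add₀ ω_ne, ω_zpow_three_mul, mul_one]
  rw [Omega3.ω_zpow (-p), Omega3.ω_zpow p, Complex.cos]
  have E1 : Complex.exp (((-p : ℤ) : ℂ) * (2 * ↑π * I / 3)) *
      Complex.exp ((x * (Real.sqrt 3 : ℝ) / 2) * I)
      = Complex.exp ((x * (Real.sqrt 3 : ℝ) / 2 - 2 * (π : ℂ) * (p : ℂ) / 3) * I) := by
    rw [← Complex.exp_add]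
    congr 1
    push_cast
    ring
  have E2 : Complex.exp ((p : ℂ) * (2 * ↑π * I / 3)) *
      Complex.exp (-((x * (Real.sqrt 3 : ℝ) / 2) * I))
      = Complex.exp (-(x * (Real.sqrt 3 : ℝ) / 2 - 2 * (π : ℂ) * (p : ℂ) / 3) * I) := by
    rw [← Complex.exp_add]
    congr 1
    ring
  linear_combination (1 / 3 : ℂ) * E1 + (1 / 3 : ℂ) * E2
end

section
/- For every complex number x, ∑_{ν ∈ ℤ} J_{4ν}(x) = cos²(x/2), ∑_{ν ∈ ℤ} J_{4ν+1}(x) = (1/2) sin x, ∑_{ν ∈ ℤ} J_{4ν+2}(x) = sin²(x/2), and ∑_{ν ∈ ℤ} J_{4ν+3}(x) = −(1/2) sin x. -/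
set_option maxHeartbeats 1000000

open scoped Real

open Complex

private def jEquiv : ℤ × ℕ ≃ ℕ × ℕ where
  toFun p := (p.2 + p.1.toNat, p.2 + (-p.1).toNat)
  invFun q := ((q.1 : ℤ) - q.2, min q.1 q.2)
  left_inv p := by
    obtain ⟨n, m⟩ := p
    simp only [Prod.mk.injEq]
    constructor <;> omega
  right_inv q := by
    obtain ⟨a, b⟩ := q
    simp only [Prod.mk.injEq]
    constructor <;> omega

private lemma besselJ_genfun (x t : ℂ) (ht : t ≠ 0) :
    Summable (fun n : ℤ => besselJ n x * t ^ n) ∧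
    ∑' n : ℤ, besselJ n x * t ^ n = Complex.exp (x * (t - t⁻¹) / 2) := by
  set u : ℂ := x * t / 2 with hu
  set v : ℂ := -(x * t⁻¹) / 2 with hv
  have hfn : Summable fun a : ℕ => ‖u ^ a / (a.factorial : ℂ)‖ :=
    NormedSpace.norm_expSeries_div_summable u
  have hgn : Summable fun b : ℕ => ‖v ^ b / (b.factorial : ℂ)‖ :=
    NormedSpace.norm_expSeries_div_summable v
  have hG : Summable (fun q : ℕ × ℕ =>
      (u ^ q.1 / (q.1.factorial : ℂ)) * (v ^ q.2 / (q.2.factorial : ℂ))) :=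
    summable_mul_of_summable_norm (f := fun a : ℕ => u ^ a / (a.factorial : ℂ))
      (g := fun b : ℕ => v ^ b / (b.factorial : ℂ)) hfn hgn
  have hGe : Summable (fun p : ℤ × ℕ =>
      (u ^ (jEquiv p).1 / (((jEquiv p).1).factorial : ℂ)) *
        (v ^ (jEquiv p).2 / (((jEquiv p).2).factorial : ℂ))) :=
    (jEquiv.summable_iff (f := fun q : ℕ × ℕ =>
      (u ^ q.1 / (q.1.factorial : ℂ)) * (v ^ q.2 / (q.2.factorial : ℂ)))).2 hG
  have inner : ∀ n : ℤ, (∑' m : ℕ,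
      (u ^ (jEquiv (n, m)).1 / (((jEquiv (n, m)).1).factorial : ℂ)) *
        (v ^ (jEquiv (n, m)).2 / (((jEquiv (n, m)).2).factorial : ℂ)))
      = besselJ n x * t ^ n := by
    intro n
    rcases le_or_gt 0 n with hn | hn
    · set p := n.toNat with hp
      have hnp : n = (p : ℤ) := by omega
      have h0 : (-n).toNat = 0 := by omega
      have hterm : ∀ m : ℕ,
          (u ^ (jEquiv (n, m)).1 / (((jEquiv (n, m)).1).factorial : ℂ)) *
            (v ^ (jEquiv (n, m)).2 / (((jEquiv (n, m)).2).factorial : ℂ))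
          = ((-1 : ℂ) ^ m / ((m.factorial : ℂ) * ((m + p).factorial : ℂ))
              * (x / 2) ^ (2 * m + p)) * t ^ p := by
        intro m
        have he : jEquiv (n, m) = (m + p, m) := by
          show ((m + n.toNat, m + (-n).toNat) : ℕ × ℕ) = _
          rw [h0, hp]
          simp
        rw [he, div_mul_div_comm]
        have ht' : t⁻¹ ^ m * t ^ (m + p) = t ^ p := by
          rw [pow_add, inv_pow, ← mul_assoc, inv_mul_cancel₀ (pow_ne_zero m ht), one_mul]
        calc u ^ (m + p) * v ^ m / (((m + p).factorial : ℂ) * (m.factorial : ℂ))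
            = ((-1 : ℂ) ^ m / ((m.factorial : ℂ) * ((m + p).factorial : ℂ))
                * (x / 2) ^ (2 * m + p)) * (t⁻¹ ^ m * t ^ (m + p)) := by
              rw [show u = x / 2 * t from by rw [hu]; ring,
                show v = -(x / 2 * t⁻¹) from by rw [hv]; ring, neg_pow, mul_pow, mul_pow]
              generalize x / 2 = y
              ring
          _ = _ := by rw [ht']
      rw [tsum_congr hterm, tsum_mul_right]
      rw [besselJ, if_pos hn, hnp, zpow_natCast]
      rfl
    · set p := n.natAbs with hp
      have hnp : n = -(p : ℤ) := by omega
      have h0 : n.toNat = 0 := by omega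
      have h1' : (-n).toNat = p := by omega
      have hterm : ∀ m : ℕ,
          (u ^ (jEquiv (n, m)).1 / (((jEquiv (n, m)).1).factorial : ℂ)) *
            (v ^ (jEquiv (n, m)).2 / (((jEquiv (n, m)).2).factorial : ℂ))
          = ((-1 : ℂ) ^ m / ((m.factorial : ℂ) * ((m + p).factorial : ℂ))
              * (x / 2) ^ (2 * m + p)) * ((-1 : ℂ) ^ p * t⁻¹ ^ p) := by
        intro m
        have he : jEquiv (n, m) = (m, m + p) := by
          show ((m + n.toNat, m + (-n).toNat) : ℕ × ℕ) = _
          rw [h0, h1']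
          simp
        rw [he, div_mul_div_comm]
        have ht' : t⁻¹ ^ (m + p) * t ^ m = t⁻¹ ^ p := by
          rw [pow_add, mul_right_comm, inv_pow, inv_mul_cancel₀ (pow_ne_zero m ht), one_mul]
        calc u ^ m * v ^ (m + p) / ((m.factorial : ℂ) * ((m + p).factorial : ℂ))
            = ((-1 : ℂ) ^ m / ((m.factorial : ℂ) * ((m + p).factorial : ℂ))
                * (x / 2) ^ (2 * m + p)) * ((-1 : ℂ) ^ p * (t⁻¹ ^ (m + p) * t ^ m)) := by
              rw [show u = x / 2 * t from by rw [hu]; ring,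
                show v = -(x / 2 * t⁻¹) from by rw [hv]; ring, neg_pow, mul_pow, mul_pow]
              generalize x / 2 = y
              ring
          _ = _ := by rw [ht']
      have hb : besselJ n x = (-1 : ℂ) ^ p * besselJNat p x := by
        rw [besselJ, if_neg (by omega), ← hp]
      have htn : t ^ n = t⁻¹ ^ p := by
        rw [hnp, zpow_neg, zpow_natCast, inv_pow]
      rw [tsum_congr hterm, tsum_mul_right, hb, htn]
      show besselJNat p x * ((-1 : ℂ) ^ p * t⁻¹ ^ p) = (-1 : ℂ) ^ p * besselJNat p x * t⁻¹ ^ p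
      ring
  have hsum : Summable (fun n : ℤ => besselJ n x * t ^ n) := by
    have hs := hGe.prod
    exact hs.congr fun n => inner n
  refine ⟨hsum, ?_⟩
  have hexp : ∀ w : ℂ, Complex.exp w = ∑' a : ℕ, w ^ a / (a.factorial : ℂ) := by
    intro w
    rw [Complex.exp_eq_exp_ℂ, NormedSpace.exp_eq_tsum_div]
  calc ∑' n : ℤ, besselJ n x * t ^ n
      = ∑' n : ℤ, ∑' m : ℕ,
          (u ^ (jEquiv (n, m)).1 / (((jEquiv (n, m)).1).factorial : ℂ)) *
            (v ^ (jEquiv (n, m)).2 / (((jEquiv (n, m)).2).factorial : ℂ)) :=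
        (tsum_congr inner).symm
    _ = ∑' p : ℤ × ℕ,
          (u ^ (jEquiv p).1 / (((jEquiv p).1).factorial : ℂ)) *
            (v ^ (jEquiv p).2 / (((jEquiv p).2).factorial : ℂ)) := (Summable.tsum_prod hGe).symm
    _ = ∑' q : ℕ × ℕ, (u ^ q.1 / (q.1.factorial : ℂ)) * (v ^ q.2 / (q.2.factorial : ℂ)) :=
        jEquiv.tsum_eq (fun q : ℕ × ℕ =>
          u ^ q.1 / (q.1.factorial : ℂ) * (v ^ q.2 / (q.2.factorial : ℂ)))
    _ = (∑' a : ℕ, u ^ a / (a.factorial : ℂ)) * (∑' b : ℕ, v ^ b / (b.factorial : ℂ)) :=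
        (tsum_mul_tsum_of_summable_norm (f := fun a : ℕ => u ^ a / (a.factorial : ℂ))
          (g := fun b : ℕ => v ^ b / (b.factorial : ℂ)) hfn hgn).symm
    _ = Complex.exp u * Complex.exp v := by rw [hexp u, hexp v]
    _ = Complex.exp (x * (t - t⁻¹) / 2) := by
        rw [← Complex.exp_add]
        congr 1
        rw [hu, hv]
        ring

private def mod4Equiv : Fin 4 × ℤ ≃ ℤ where
  toFun p := 4 * p.2 + (p.1.val : ℤ)
  invFun n := (⟨(n % 4).toNat, by omega⟩, n / 4)
  left_inv p := by
    obtain ⟨k, ν⟩ := p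
    have hk := k.isLt
    simp only [Prod.mk.injEq]
    constructor
    · apply Fin.ext
      show ((4 * ν + (k.val : ℤ)) % 4).toNat = k.val
      omega
    · show (4 * ν + (k.val : ℤ)) / 4 = ν
      omega
  right_inv n := by
    show 4 * (n / 4) + (((n % 4).toNat : ℕ) : ℤ) = n
    omega

private lemma bessel_sum4 (x t : ℂ) (ht : t ≠ 0) (ht4 : t ^ (4 : ℕ) = 1) :
    (∑' ν : ℤ, besselJ (4 * ν) x) + (∑' ν : ℤ, besselJ (4 * ν + 1) x) * t
      + (∑' ν : ℤ, besselJ (4 * ν + 2) x) * t ^ 2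
      + (∑' ν : ℤ, besselJ (4 * ν + 3) x) * t ^ 3
      = Complex.exp (x * (t - t⁻¹) / 2) := by
  obtain ⟨hsum, htsum⟩ := besselJ_genfun x t ht
  have hz : ∀ (ν : ℤ) (k : ℕ), t ^ (4 * ν + (k : ℤ)) = t ^ k := by
    intro ν k
    rw [zpow_add₀ ht, show (4 : ℤ) * ν = ((4 : ℕ) : ℤ) * ν from by norm_num,
      zpow_mul, zpow_natCast, zpow_natCast, ht4, one_zpow, one_mul]
  have key : ∀ k : Fin 4, (∑' ν : ℤ, besselJ (mod4Equiv (k, ν)) x * t ^ (mod4Equiv (k, ν)))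
      = (∑' ν : ℤ, besselJ (4 * ν + (k.val : ℤ)) x) * t ^ (k.val : ℕ) := by
    intro k
    rw [← tsum_mul_right]
    refine tsum_congr fun ν => ?_
    have hm : mod4Equiv (k, ν) = 4 * ν + (k.val : ℤ) := rfl
    rw [hm, hz]
  calc (∑' ν : ℤ, besselJ (4 * ν) x) + (∑' ν : ℤ, besselJ (4 * ν + 1) x) * t
      + (∑' ν : ℤ, besselJ (4 * ν + 2) x) * t ^ 2
      + (∑' ν : ℤ, besselJ (4 * ν + 3) x) * t ^ 3
      = ∑ k : Fin 4, (∑' ν : ℤ, besselJ (4 * ν + (k.val : ℤ)) x) * t ^ (k.val : ℕ) := by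
        rw [Fin.sum_univ_four]
        norm_num
    _ = ∑ k : Fin 4, ∑' ν : ℤ, besselJ (mod4Equiv (k, ν)) x * t ^ (mod4Equiv (k, ν)) := by
        exact (Finset.sum_congr rfl fun k _ => key k).symm
    _ = ∑' p : Fin 4 × ℤ, besselJ (mod4Equiv p) x * t ^ (mod4Equiv p) := by
        have hs2 : Summable (fun p : Fin 4 × ℤ => besselJ (mod4Equiv p) x * t ^ (mod4Equiv p)) :=
          (mod4Equiv.summable_iff (f := fun n : ℤ => besselJ n x * t ^ n)).2 hsum
        rw [Summable.tsum_prod hs2, tsum_fintype]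
    _ = ∑' n : ℤ, besselJ n x * t ^ n :=
        mod4Equiv.tsum_eq (fun n : ℤ => besselJ n x * t ^ n)
    _ = Complex.exp (x * (t - t⁻¹) / 2) := htsum

theorem stmt_7 (x : ℂ) :
    (∑' ν : ℤ, besselJ (4 * ν) x = Complex.cos (x / 2) ^ 2) ∧
    (∑' ν : ℤ, besselJ (4 * ν + 1) x = (1 / 2) * Complex.sin x) ∧
    (∑' ν : ℤ, besselJ (4 * ν + 2) x = Complex.sin (x / 2) ^ 2) ∧
    (∑' ν : ℤ, besselJ (4 * ν + 3) x = -((1 / 2) * Complex.sin x)) := by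
  have hI2 : (I : ℂ) ^ 2 = -1 := I_sq
  have hI3 : (I : ℂ) ^ 3 = -I := by rw [pow_succ, hI2]; ring
  have hnI2 : (-I : ℂ) ^ 2 = -1 := by rw [neg_sq, hI2]
  have hnI3 : (-I : ℂ) ^ 3 = I := by rw [pow_succ, hnI2]; ring
  have h1 := bessel_sum4 x 1 one_ne_zero (one_pow 4)
  have h2 := bessel_sum4 x (-1) (by norm_num) (by norm_num)
  have h3 := bessel_sum4 x I I_ne_zero (by rw [show (4 : ℕ) = 2 * 2 from rfl, pow_mul, hI2]; norm_num)
  have h4 := bessel_sum4 x (-I) (by simp [I_ne_zero]) (by rw [show (4 : ℕ) = 2 * 2 from rfl, pow_mul, hnI2]; norm_num)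
  rw [show x * ((1 : ℂ) - 1⁻¹) / 2 = 0 from by norm_num, Complex.exp_zero] at h1
  rw [show x * ((-1 : ℂ) - (-1)⁻¹) / 2 = 0 from by norm_num, Complex.exp_zero] at h2
  rw [hI2, hI3, show x * (I - I⁻¹) / 2 = x * I from by rw [inv_I]; ring] at h3
  rw [hnI2, hnI3, show x * (-I - (-I)⁻¹) / 2 = -x * I from by rw [inv_neg, inv_I]; ring] at h4
  set A0 := ∑' ν : ℤ, besselJ (4 * ν) x with hA0
  set A1 := ∑' ν : ℤ, besselJ (4 * ν + 1) x with hA1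
  set A2 := ∑' ν : ℤ, besselJ (4 * ν + 2) x with hA2
  set A3 := ∑' ν : ℤ, besselJ (4 * ν + 3) x with hA3
  set a := Complex.exp (x / 2 * I) with ha
  set b := Complex.exp (-(x / 2) * I) with hb
  set c := Complex.exp (x * I) with hc
  set d := Complex.exp (-x * I) with hd
  have ha2 : a * a = c := by
    rw [ha, hc, ← Complex.exp_add, show x / 2 * I + x / 2 * I = x * I from by ring]
  have hb2 : b * b = d := by
    rw [hb, hd, ← Complex.exp_add, show -(x / 2) * I + -(x / 2) * I = -x * I from by ring]
  have hab : a * b = 1 := by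
    rw [ha, hb, ← Complex.exp_add, show x / 2 * I + -(x / 2) * I = 0 from by ring,
      Complex.exp_zero]
  have hcos : Complex.cos (x / 2) = (a + b) / 2 := rfl
  have hsin2 : Complex.sin (x / 2) = (b - a) * I / 2 := rfl
  have hsinx : Complex.sin x = (d - c) * I / 2 := rfl
  refine ⟨?_, ?_, ?_, ?_⟩
  · rw [hcos]
    linear_combination (h1 + h2 + h3 + h4) / 4 - ha2 / 4 - hb2 / 4 - hab / 2
  · rw [hsinx]
    linear_combination h1 / 4 - h2 / 4 - I / 4 * h3 + I / 4 * h4 + (A1 - A3) / 2 * hI2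
  · rw [hsin2]
    linear_combination (h1 + h2 - h3 - h4) / 4 + ha2 / 4 + hb2 / 4 - hab / 2
      + (-(a * a) - b * b + 2 * (a * b)) / 4 * hI2
  · rw [hsinx]
    linear_combination h1 / 4 - h2 / 4 + I / 4 * h3 - I / 4 * h4 + (A3 - A1) / 2 * hI2
end

section
/- For every complex number x, ∑_{ν ∈ ℤ} J_{6ν}(x) = (1/3)[1 + 2 cos(x√3/2)], ∑_{ν ∈ ℤ} J_{6ν+1}(x) = (1/√3) sin(x√3/2), ∑_{ν ∈ ℤ} J_{6ν+2}(x) = (1/3)[1 − cos(x√3/2)], and ∑_{ν ∈ ℤ} J_{6ν+3}(x) = 0. -/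
open scoped Real

open Complex Finset

lemma summable_besselTerm (n : ℕ) (x : ℂ) :
    Summable (fun m : ℕ => (-1 : ℂ) ^ m / ((m.factorial : ℂ) * ((m + n).factorial : ℂ))
      * (x / 2) ^ (2 * m + n)) := by
  apply Summable.of_norm
  have hle : ∀ m : ℕ, ‖(-1 : ℂ) ^ m / ((m.factorial : ℂ) * ((m + n).factorial : ℂ))
      * (x / 2) ^ (2 * m + n)‖ ≤ ‖x / 2‖ ^ n * ((‖x / 2‖ ^ 2) ^ m / m.factorial) := by
    intro m
    have h1 : ‖(-1 : ℂ) ^ m / ((m.factorial : ℂ) * ((m + n).factorial : ℂ))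
        * (x / 2) ^ (2 * m + n)‖
        = ‖x / 2‖ ^ (2 * m + n) / ((m.factorial : ℝ) * ((m + n).factorial : ℝ)) := by
      rw [norm_mul, norm_div, norm_pow, norm_pow, norm_neg, norm_one, one_pow, one_div]
      rw [norm_mul]
      simp [Complex.norm_natCast]
      ring
    rw [h1]
    have h2 : ‖x / 2‖ ^ (2 * m + n) = (‖x / 2‖ ^ 2) ^ m * ‖x / 2‖ ^ n := by
      rw [pow_add, pow_mul]
    rw [h2]
    have hf1 : (1 : ℝ) ≤ ((m + n).factorial : ℝ) := by exact_mod_cast (m + n).factorial_pos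
    have hf2 : (0 : ℝ) < (m.factorial : ℝ) := by exact_mod_cast m.factorial_pos
    calc (‖x / 2‖ ^ 2) ^ m * ‖x / 2‖ ^ n / ((m.factorial : ℝ) * ((m + n).factorial : ℝ))
        ≤ (‖x / 2‖ ^ 2) ^ m * ‖x / 2‖ ^ n / ((m.factorial : ℝ) * 1) := by
          gcongr
        _ = ‖x / 2‖ ^ n * ((‖x / 2‖ ^ 2) ^ m / m.factorial) := by ring
  exact Summable.of_nonneg_of_le (fun m => norm_nonneg _) hle
    ((Real.summable_pow_div_factorial (‖x / 2‖ ^ 2)).mul_left _)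

lemma hasSum_besselJNat (n : ℕ) (x : ℂ) :
    HasSum (fun m : ℕ => (-1 : ℂ) ^ m / ((m.factorial : ℂ) * ((m + n).factorial : ℂ))
      * (x / 2) ^ (2 * m + n)) (besselJNat n x) :=
  (summable_besselTerm n x).hasSum

/-- reindexing equiv -/
def eIdx : ℤ × ℕ ≃ ℕ × ℕ where
  toFun p := (p.2 + p.1.toNat, p.2 + (-p.1).toNat)
  invFun q := ((q.1 : ℤ) - q.2, min q.1 q.2)
  left_inv p := by
    obtain ⟨n, k⟩ := p
    simp only [Prod.mk.injEq]
    constructor <;> push_cast <;> omega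
  right_inv q := by
    obtain ⟨m, k⟩ := q
    simp only [Prod.mk.injEq]
    constructor <;> push_cast <;> omega

set_option maxHeartbeats 1000000 in
theorem hasSum_besselJ (x t : ℂ) (ht : t ≠ 0) :
    HasSum (fun n : ℤ => besselJ n x * t ^ n) (Complex.exp (x / 2 * (t - t⁻¹))) := by
  have hf : HasSum (fun m : ℕ => (x * t / 2) ^ m / (m.factorial : ℂ))
      (Complex.exp (x * t / 2)) := by
    rw [Complex.exp_eq_exp_ℂ]
    exact NormedSpace.expSeries_div_hasSum_exp (x * t / 2)
  have hg : HasSum (fun k : ℕ => (-(x * t⁻¹) / 2) ^ k / (k.factorial : ℂ))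
      (Complex.exp (-(x * t⁻¹) / 2)) := by
    rw [Complex.exp_eq_exp_ℂ]
    exact NormedSpace.expSeries_div_hasSum_exp (-(x * t⁻¹) / 2)
  have hfg : Summable (fun q : ℕ × ℕ =>
      ((x * t / 2) ^ q.1 / (q.1.factorial : ℂ)) * ((-(x * t⁻¹) / 2) ^ q.2 / (q.2.factorial : ℂ))) :=
by
    have h1 := NormedSpace.norm_expSeries_div_summable (x * t / 2)
    have h2 := NormedSpace.norm_expSeries_div_summable (-(x * t⁻¹) / 2)
    exact (h1.mul_norm h2).of_norm
  have hprod := hf.mul hg hfg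
  rw [← Complex.exp_add, show x * t / 2 + -(x * t⁻¹) / 2 = x / 2 * (t - t⁻¹) by ring] at hprod
  have hcomp : HasSum (fun p : ℤ × ℕ =>
      ((x * t / 2) ^ (eIdx p).1 / ((eIdx p).1.factorial : ℂ))
        * ((-(x * t⁻¹) / 2) ^ (eIdx p).2 / ((eIdx p).2.factorial : ℂ)))
      (Complex.exp (x / 2 * (t - t⁻¹))) := eIdx.hasSum_iff.mpr hprod
  refine HasSum.prod_fiberwise hcomp ?_
  intro n
  rcases le_or_gt 0 n with hn | hn
  · lift n to ℕ using hn
    have hJ : besselJ (n : ℤ) x = besselJNat n x := by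
      simp [besselJ]
    rw [hJ, zpow_natCast]
    have h := (hasSum_besselJNat n x).mul_right (t ^ n)
    convert h using 1
    · rfl
    funext k
    have e1 : (eIdx ((n : ℤ), k)).1 = k + n := by
      simp [eIdx]
    have e2 : (eIdx ((n : ℤ), k)).2 = k := by
      simp [eIdx]
    rw [e1, e2, show (-(x * t⁻¹) / 2 : ℂ) = (-1) * (x * t⁻¹ / 2) by ring, mul_pow]
    have hTT : t ^ k * t⁻¹ ^ k = 1 := by
      rw [← mul_pow, mul_inv_cancel₀ ht, one_pow]
    linear_combination ((-1 : ℂ) ^ k * (x / 2) ^ (2 * k + n) * t ^ n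
      / ((k.factorial : ℂ) * ((k + n).factorial : ℂ))) * hTT
  · obtain ⟨N, rfl⟩ : ∃ N : ℕ, n = -(N : ℤ) := ⟨n.natAbs, by omega⟩
    have hN : 0 < N := by omega
    have hJ : besselJ (-(N : ℤ)) x = (-1 : ℂ) ^ N * besselJNat N x := by
      rw [besselJ, if_neg (by omega)]
      congr 1 <;> simp
    rw [hJ]
    have hzp : t ^ (-(N : ℤ)) = (t ^ N)⁻¹ := by
      rw [zpow_neg, zpow_natCast]
    rw [hzp]
    have h := (((hasSum_besselJNat N x).mul_left ((-1 : ℂ) ^ N)).mul_right ((t ^ N)⁻¹))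
    convert h using 1
    · rfl
    funext k
    have e1 : (eIdx ((-(N : ℤ)), k)).1 = k := by
      simp [eIdx]
    have e2 : (eIdx ((-(N : ℤ)), k)).2 = k + N := by
      simp [eIdx]
    rw [e1, e2, show (-(x * t⁻¹) / 2 : ℂ) = (-1) * (x * t⁻¹ / 2) by ring, mul_pow]
    have hTT : t ^ k * t⁻¹ ^ k = 1 := by
      rw [← mul_pow, mul_inv_cancel₀ ht, one_pow]
    linear_combination ((-1 : ℂ) ^ k * (-1 : ℂ) ^ N * (x / 2) ^ (2 * k + N) * t⁻¹ ^ N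
      / ((k.factorial : ℂ) * ((k + N).factorial : ℂ))) * hTT

noncomputable def ζ6 : ℂ := Complex.exp ((Real.pi : ℂ) * Complex.I / 3)

lemma ζ6_ne_zero : ζ6 ≠ 0 := Complex.exp_ne_zero _

lemma ζ6_pow_six : ζ6 ^ (6 : ℕ) = 1 := by
  rw [ζ6, ← Complex.exp_nat_mul,
    show ((6 : ℕ) : ℂ) * ((Real.pi : ℂ) * Complex.I / 3) = 2 * (Real.pi : ℂ) * Complex.I by
      push_cast; ring, Complex.exp_two_pi_mul_I]

lemma ζ6_zpow_eq_one_iff (m : ℤ) : ζ6 ^ m = 1 ↔ (6 : ℤ) ∣ m := by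
  rw [ζ6, ← Complex.exp_int_mul, Complex.exp_eq_one_iff]
  constructor
  · rintro ⟨k, hk⟩
    refine ⟨k, ?_⟩
    have hπ : (Real.pi : ℂ) ≠ 0 := by exact_mod_cast Real.pi_ne_zero
    have h2 : (m : ℂ) * ((Real.pi : ℂ) * Complex.I) = ((6 * k : ℤ) : ℂ) * ((Real.pi : ℂ) * Complex.I) := by
      push_cast
      linear_combination 3 * hk
    have := mul_right_cancel₀ (mul_ne_zero hπ Complex.I_ne_zero) h2
    exact_mod_cast this
  · rintro ⟨k, rfl⟩
    exact ⟨k, by push_cast; ring⟩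

lemma ζ6_filter (m : ℤ) :
    ∑ j ∈ Finset.range 6, (ζ6 ^ m) ^ j = if (6 : ℤ) ∣ m then (6 : ℂ) else 0 := by
  by_cases h : ζ6 ^ m = 1
  · rw [if_pos ((ζ6_zpow_eq_one_iff m).1 h), h]
    simp
  · rw [if_neg (fun hd => h ((ζ6_zpow_eq_one_iff m).2 hd))]
    rw [geom_sum_eq h 6]
    have hw : (ζ6 ^ m) ^ (6 : ℕ) = 1 := by
      rw [← zpow_natCast (ζ6 ^ m), ← zpow_mul, mul_comm, zpow_mul, zpow_natCast, ζ6_pow_six,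
        one_zpow]
    rw [hw]
    simp

lemma residue_sum (x : ℂ) (r : ℕ) :
    ∑' ν : ℤ, besselJ (6 * ν + r) x
      = ∑ j ∈ Finset.range 6, (1 / 6 : ℂ) * (ζ6⁻¹) ^ (j * r)
          * Complex.exp (x / 2 * (ζ6 ^ j - (ζ6⁻¹) ^ j)) := by
  have hζ0 : ζ6 ≠ 0 := ζ6_ne_zero
  have hE : ∀ j : ℕ, HasSum (fun n : ℤ => besselJ n x * (ζ6 ^ j) ^ n)
      (Complex.exp (x / 2 * (ζ6 ^ j - (ζ6⁻¹) ^ j))) := by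
    intro j
    have h := hasSum_besselJ x (ζ6 ^ j) (pow_ne_zero _ hζ0)
    rwa [← inv_pow] at h
  have hinj : Function.Injective (fun ν : ℤ => 6 * ν + (r : ℤ)) := by
    intro a b h
    have h' : 6 * a + (r : ℤ) = 6 * b + (r : ℤ) := h
    omega
  set g : ℤ → ℂ := fun n => if (6 : ℤ) ∣ (n - r) then besselJ n x else 0 with hgdef
  have hsupp : Function.support g ⊆ Set.range (fun ν : ℤ => 6 * ν + (r : ℤ)) := by
    intro n hn
    by_cases hd : (6 : ℤ) ∣ (n - r)
    · obtain ⟨ν, hν⟩ := hd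
      refine ⟨ν, ?_⟩
      show 6 * ν + (r : ℤ) = n
      omega
    · simp only [hgdef, Function.mem_support, if_neg hd, ne_eq, not_true_eq_false] at hn
  have key := Function.Injective.tsum_eq hinj hsupp
  have hterm : ∀ (n : ℤ) (j : ℕ),
      (1 / 6 : ℂ) * (ζ6⁻¹) ^ (j * r) * (besselJ n x * (ζ6 ^ j) ^ n)
        = (1 / 6 : ℂ) * besselJ n x * (ζ6 ^ (n - r)) ^ j := by
    intro n j
    have h1 : ((ζ6⁻¹) ^ (j * r) : ℂ) = ζ6 ^ (-(j * r : ℕ) : ℤ) := by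
      rw [inv_pow, ← zpow_natCast, ← zpow_neg]
    have h2 : ((ζ6 ^ j) ^ n : ℂ) = ζ6 ^ ((j : ℤ) * n) := by
      rw [← zpow_natCast ζ6 j, ← zpow_mul]
    calc (1 / 6 : ℂ) * (ζ6⁻¹) ^ (j * r) * (besselJ n x * (ζ6 ^ j) ^ n)
        = (1 / 6 : ℂ) * besselJ n x * (ζ6 ^ (-(j * r : ℕ) : ℤ) * ζ6 ^ ((j : ℤ) * n)) := by
          rw [h1, h2]; ring
      _ = (1 / 6 : ℂ) * besselJ n x * ζ6 ^ ((n - r) * (j : ℤ)) := by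
          rw [← zpow_add₀ hζ0]
          congr 1
          push_cast
          ring
      _ = (1 / 6 : ℂ) * besselJ n x * (ζ6 ^ (n - r)) ^ j := by
          rw [zpow_mul, zpow_natCast]
  calc ∑' ν : ℤ, besselJ (6 * ν + r) x
      = ∑' n : ℤ, g n := by
        rw [← key]
        refine tsum_congr fun ν => ?_
        simp only [hgdef]
        rw [if_pos ⟨ν, by ring⟩]
    _ = ∑' n : ℤ, ∑ j ∈ Finset.range 6,
          (1 / 6 : ℂ) * (ζ6⁻¹) ^ (j * r) * (besselJ n x * (ζ6 ^ j) ^ n) := by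
        refine tsum_congr fun n => ?_
        rw [Finset.sum_congr rfl (fun j _ => hterm n j), ← Finset.mul_sum, ζ6_filter (n - r)]
        by_cases hd : (6 : ℤ) ∣ (n - r)
        · simp only [hgdef]
          rw [if_pos hd, if_pos hd]; ring
        · simp only [hgdef]
          rw [if_neg hd, if_neg hd]; ring
    _ = ∑ j ∈ Finset.range 6, ∑' n : ℤ,
          (1 / 6 : ℂ) * (ζ6⁻¹) ^ (j * r) * (besselJ n x * (ζ6 ^ j) ^ n) :=
        Summable.tsum_finsetSum (fun j _ => ((hE j).summable.mul_left _))
    _ = _ := Finset.sum_congr rfl fun j _ => ((hE j).mul_left _).tsum_eq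

lemma sqrt3_sq : ((Real.sqrt 3 : ℝ) : ℂ) ^ 2 = 3 := by
  norm_cast
  exact Real.sq_sqrt (by norm_num)

lemma zeta_eq : ζ6 = (1 + ((Real.sqrt 3 : ℝ) : ℂ) * Complex.I) / 2 := by
  rw [ζ6, show (Real.pi : ℂ) * Complex.I / 3 = ((Real.pi / 3 : ℝ) : ℂ) * Complex.I by
    push_cast; ring, Complex.exp_mul_I, ← Complex.ofReal_cos, ← Complex.ofReal_sin,
    Real.cos_pi_div_three, Real.sin_pi_div_three]
  push_cast
  ring

lemma zeta_inv_eq : ζ6⁻¹ = (1 - ((Real.sqrt 3 : ℝ) : ℂ) * Complex.I) / 2 := by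
  rw [zeta_eq]
  refine inv_eq_of_mul_eq_one_right ?_
  linear_combination (-(Complex.I ^ 2) / 4) * sqrt3_sq + (-(3 : ℂ) / 4) * Complex.I_sq

lemma ha2 : ζ6 ^ 2 = (-1 + ((Real.sqrt 3 : ℝ) : ℂ) * Complex.I) / 2 := by
  rw [sq, zeta_eq]
  linear_combination (Complex.I ^ 2 / 4) * sqrt3_sq + (3 / 4 : ℂ) * Complex.I_sq

lemma ha3 : ζ6 ^ 3 = -1 := by
  rw [pow_succ, ha2, zeta_eq]
  linear_combination (Complex.I ^ 2 / 4) * sqrt3_sq + (3 / 4 : ℂ) * Complex.I_sq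

lemma ha4 : ζ6 ^ 4 = (-1 - ((Real.sqrt 3 : ℝ) : ℂ) * Complex.I) / 2 := by
  rw [pow_succ, ha3, zeta_eq]
  ring

lemma ha5 : ζ6 ^ 5 = (1 - ((Real.sqrt 3 : ℝ) : ℂ) * Complex.I) / 2 := by
  rw [pow_succ, ha4, zeta_eq]
  linear_combination (-(Complex.I ^ 2) / 4) * sqrt3_sq + (-(3 : ℂ) / 4) * Complex.I_sq

lemma hb2 : (ζ6⁻¹) ^ 2 = (-1 - ((Real.sqrt 3 : ℝ) : ℂ) * Complex.I) / 2 := by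
  rw [sq, zeta_inv_eq]
  linear_combination (Complex.I ^ 2 / 4) * sqrt3_sq + (3 / 4 : ℂ) * Complex.I_sq

lemma hb3 : (ζ6⁻¹) ^ 3 = -1 := by
  rw [pow_succ, hb2, zeta_inv_eq]
  linear_combination (Complex.I ^ 2 / 4) * sqrt3_sq + (3 / 4 : ℂ) * Complex.I_sq

lemma hb4 : (ζ6⁻¹) ^ 4 = (-1 + ((Real.sqrt 3 : ℝ) : ℂ) * Complex.I) / 2 := by
  rw [pow_succ, hb3, zeta_inv_eq]
  ring

lemma hb5 : (ζ6⁻¹) ^ 5 = (1 + ((Real.sqrt 3 : ℝ) : ℂ) * Complex.I) / 2 := by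
  rw [pow_succ, hb4, zeta_inv_eq]
  linear_combination (-(Complex.I ^ 2) / 4) * sqrt3_sq + (-(3 : ℂ) / 4) * Complex.I_sq

lemma hb6 : (ζ6⁻¹) ^ 6 = 1 := by
  rw [pow_succ, hb5, zeta_inv_eq]
  linear_combination (-(Complex.I ^ 2) / 4) * sqrt3_sq + (-(3 : ℂ) / 4) * Complex.I_sq

lemma hb8 : (ζ6⁻¹) ^ 8 = (-1 - ((Real.sqrt 3 : ℝ) : ℂ) * Complex.I) / 2 := by
  rw [show (8 : ℕ) = 6 + 2 from rfl, pow_add, hb6, one_mul, hb2]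

lemma hb9 : (ζ6⁻¹) ^ 9 = -1 := by
  rw [show (9 : ℕ) = 6 + 3 from rfl, pow_add, hb6, one_mul, hb3]

lemma hb10 : (ζ6⁻¹) ^ 10 = (-1 + ((Real.sqrt 3 : ℝ) : ℂ) * Complex.I) / 2 := by
  rw [show (10 : ℕ) = 6 + 4 from rfl, pow_add, hb6, one_mul, hb4]

lemma hb12 : (ζ6⁻¹) ^ 12 = 1 := by
  rw [show (12 : ℕ) = 6 + 6 from rfl, pow_add, hb6, one_mul]

lemma hb15 : (ζ6⁻¹) ^ 15 = -1 := by
  rw [show (15 : ℕ) = 6 + 9 from rfl, pow_add, hb6, one_mul, hb9]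

theorem stmt_8 (x : ℂ) :
    (∑' ν : ℤ, besselJ (6 * ν) x
        = (1 / 3) * (1 + 2 * Complex.cos (x * (Real.sqrt 3 : ℝ) / 2))) ∧
    (∑' ν : ℤ, besselJ (6 * ν + 1) x
        = (1 / (Real.sqrt 3 : ℂ)) * Complex.sin (x * (Real.sqrt 3 : ℝ) / 2)) ∧
    (∑' ν : ℤ, besselJ (6 * ν + 2) x
        = (1 / 3) * (1 - Complex.cos (x * (Real.sqrt 3 : ℝ) / 2))) ∧
    (∑' ν : ℤ, besselJ (6 * ν + 3) x = 0) := by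
  have e1 : x / 2 * ((1 + ((Real.sqrt 3 : ℝ) : ℂ) * Complex.I) / 2
      - (1 - ((Real.sqrt 3 : ℝ) : ℂ) * Complex.I) / 2)
      = x * ((Real.sqrt 3 : ℝ) : ℂ) / 2 * Complex.I := by ring
  have e2 : x / 2 * ((-1 + ((Real.sqrt 3 : ℝ) : ℂ) * Complex.I) / 2
      - (-1 - ((Real.sqrt 3 : ℝ) : ℂ) * Complex.I) / 2)
      = x * ((Real.sqrt 3 : ℝ) : ℂ) / 2 * Complex.I := by ring
  have e3 : x / 2 * ((-1 : ℂ) - -1) = 0 := by ring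
  have e4 : x / 2 * ((-1 - ((Real.sqrt 3 : ℝ) : ℂ) * Complex.I) / 2
      - (-1 + ((Real.sqrt 3 : ℝ) : ℂ) * Complex.I) / 2)
      = -(x * ((Real.sqrt 3 : ℝ) : ℂ) / 2) * Complex.I := by ring
  have e5 : x / 2 * ((1 - ((Real.sqrt 3 : ℝ) : ℂ) * Complex.I) / 2
      - (1 + ((Real.sqrt 3 : ℝ) : ℂ) * Complex.I) / 2)
      = -(x * ((Real.sqrt 3 : ℝ) : ℂ) / 2) * Complex.I := by ring
  refine ⟨?_, ?_, ?_, ?_⟩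
  · have h0 := residue_sum x 0
    simp only [Finset.sum_range_succ, Finset.sum_range_zero, zero_add, Nat.mul_zero, pow_zero,
      pow_one, sub_self, mul_zero, Complex.exp_zero, Nat.cast_zero, add_zero] at h0
    rw [hb5, hb4, hb3, hb2, ha5, ha4, ha3, ha2, zeta_inv_eq, zeta_eq,
      e1, e2, e3, e4, e5, Complex.exp_zero] at h0
    rw [h0, Complex.cos]
    ring
  · have h1 := residue_sum x 1
    simp only [Finset.sum_range_succ, Finset.sum_range_zero, zero_add, Nat.mul_one, pow_zero,
      pow_one, sub_self, mul_zero, Complex.exp_zero, Nat.cast_one] at h1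
    rw [hb5, hb4, hb3, hb2, ha5, ha4, ha3, ha2, zeta_inv_eq, zeta_eq,
      e1, e2, e3, e4, e5, Complex.exp_zero] at h1
    have hinv : (1 / ((Real.sqrt 3 : ℝ) : ℂ)) = ((Real.sqrt 3 : ℝ) : ℂ) / 3 := by
      have hs0 : ((Real.sqrt 3 : ℝ) : ℂ) ≠ 0 := by
        intro h
        have h2 := sqrt3_sq
        rw [h] at h2
        norm_num at h2
      field_simp
      linear_combination -sqrt3_sq
    rw [h1, Complex.sin, hinv]
    ring
  · have h2 := residue_sum x 2
    simp only [Finset.sum_range_succ, Finset.sum_range_zero, zero_add, Nat.reduceMul, pow_zero,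
      pow_one, sub_self, mul_zero, Complex.exp_zero, Nat.cast_ofNat] at h2
    rw [hb10, hb8, hb6, hb5, hb4, hb3, hb2, ha5, ha4, ha3, ha2, zeta_inv_eq, zeta_eq,
      e1, e2, e3, e4, e5, Complex.exp_zero] at h2
    rw [h2, Complex.cos]
    ring
  · have h3 := residue_sum x 3
    simp only [Finset.sum_range_succ, Finset.sum_range_zero, zero_add, Nat.reduceMul, pow_zero,
      pow_one, sub_self, mul_zero, Complex.exp_zero, Nat.cast_ofNat] at h3
    rw [hb15, hb12, hb9, hb6, hb5, hb4, hb3, hb2, ha5, ha4, ha3, ha2, zeta_inv_eq, zeta_eq,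
      e1, e2, e3, e4, e5, Complex.exp_zero] at h3
    rw [h3]
    ring
end

section
/- For every complex number x, ∑_{ν ∈ ℤ} (-1)^ν J_{4ν}(x) = cos(x/√2), ∑_{ν ∈ ℤ} (-1)^ν J_{4ν+1}(x) = (1/√2) sin(x/√2), and ∑_{ν ∈ ℤ} (-1)^ν J_{4ν+2}(x) = 0. -/
open scoped Real
open Complex

/-- the basic term -/
noncomputable def trm (x : ℂ) (p q : ℕ) : ℂ :=
  (-1 : ℂ) ^ p / ((p.factorial : ℂ) * (q.factorial : ℂ)) * (x / 2) ^ (p + q)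

lemma norm_trm (x : ℂ) (p q : ℕ) :
    ‖trm x p q‖ = (‖x‖/2) ^ (p+q) / (p.factorial * q.factorial) := by
  have : ‖x/2‖ = ‖x‖/2 := by simp [norm_div]
  simp [trm, norm_div, norm_mul, norm_pow, this, Complex.norm_natCast]
  ring

lemma besselJNat_eq (n : ℕ) (x : ℂ) : besselJNat n x = ∑' m : ℕ, trm x m (m + n) := by
  apply tsum_congr; intro m
  simp only [besselJNat, trm]
  rw [show m + (m + n) = 2*m + n by omega]

lemma besselJ_eq (n : ℤ) (x : ℂ) :
    besselJ n x = ∑' m : ℕ, trm x (m + (-n).toNat) (m + n.toNat) := by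
  by_cases h : 0 ≤ n
  · rw [besselJ, if_pos h]
    have h1 : (-n).toNat = 0 := by omega
    rw [h1, besselJNat_eq]
    apply tsum_congr; intro m
    congr 1 <;> omega
  · rw [besselJ, if_neg h]
    have h1 : n.toNat = 0 := by omega
    rw [h1, besselJNat_eq, ← tsum_mul_left]
    apply tsum_congr; intro m
    have h2 : m + (-n).toNat = m + n.natAbs := by omega
    rw [h2]
    simp only [trm]
    rw [show m + n.natAbs + (m + 0) = m + (m + n.natAbs) by omega,
        show (m+0).factorial = m.factorial by rw [Nat.add_zero]]
    rw [show (-1 : ℂ)^(m + n.natAbs) = (-1)^n.natAbs * (-1)^m by rw [pow_add]; ring]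
    ring

noncomputable def uu : ℂ := (1 + Complex.I) / (Real.sqrt 2 : ℝ)

lemma sq2_ne : ((Real.sqrt 2 : ℝ) : ℂ) ≠ 0 := by
  rw [Complex.ofReal_ne_zero]
  positivity

lemma sq2_sq : ((Real.sqrt 2 : ℝ) : ℂ)^2 = 2 := by
  rw [← Complex.ofReal_pow, Real.sq_sqrt (by norm_num : (2:ℝ) ≥ 0)]
  norm_num

lemma uu_sq : uu^2 = Complex.I := by
  rw [uu, div_pow, sq2_sq]
  have : (1 + Complex.I)^2 = 2 * Complex.I := by
    have := Complex.I_sq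
    ring_nf
    rw [Complex.I_sq]; ring
  rw [this]; ring

lemma uu_ne : uu ≠ 0 := by
  intro h
  have := uu_sq
  rw [h] at this
  simp at this
  exact Complex.I_ne_zero this.symm

lemma uu_zpow4 : uu ^ (4:ℤ) = -1 := by
  have : uu ^ (4:ℤ) = uu ^ (4:ℕ) := by norm_cast
  rw [this, show (4:ℕ) = 2*2 by norm_num, pow_mul, uu_sq, Complex.I_sq]

lemma uu_key (a : ℤ) (b : ℕ) : uu ^ (4*a + (b:ℤ)) = (-1:ℂ)^a * uu^b := by
  rw [zpow_add₀ uu_ne, zpow_mul, uu_zpow4, zpow_natCast]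

lemma neg_one_zpow_odd_mul (j : ℕ) (hj : Odd j) (a : ℤ) :
    (-1:ℂ)^((j:ℤ)*a) = (-1:ℂ)^a := by
  rw [mul_comm, zpow_mul, zpow_natCast]
  rcases Int.even_or_odd a with ha | ha
  · rw [ha.neg_one_zpow, one_pow]
  · rw [ha.neg_one_zpow, hj.neg_one_pow]

lemma uu_heven (n : ℕ) : uu^(2*n) = Complex.I^n := by rw [pow_mul, uu_sq]
lemma uu_hodd (n : ℕ) : uu^(2*n+1) = Complex.I^n * uu := by rw [pow_succ, pow_mul, uu_sq]

lemma c_eq (d : ℤ) :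
    (if d % 4 = 0 then (-1:ℂ)^(d/4) else 0)
      = 1/4 * (uu^d + uu^(3*d) + uu^(5*d) + uu^(7*d)) := by
  set k := d / 4 with hk
  set t := d % 4 with ht
  have ht0 : 0 ≤ t := Int.emod_nonneg d (by norm_num)
  have ht4 : t < 4 := Int.emod_lt_of_pos d (by norm_num)
  have hd : d = 4*k + t := by omega
  set s0 : ℂ := (-1:ℂ)^k with hs0
  have main : ∀ (j : ℤ) (c : ℕ), Odd j → j*d = 4*(j*k) + (c:ℤ) → uu^(j*d) = s0 * uu^c := by
    intro j c hj he
    rw [he, uu_key, zpow_mul, hj.neg_one_zpow]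
  have e1 : ∀ c : ℕ, d = 4*k + (c:ℤ) → uu^d = s0 * uu^c := by
    intro c hc
    have := main 1 c ⟨0, by norm_num⟩ (by omega)
    rwa [one_mul] at this
  have e3 : ∀ c : ℕ, 3*d = 4*(3*k) + (c:ℤ) → uu^(3*d) = s0 * uu^c :=
    fun c hc => main 3 c ⟨1, by norm_num⟩ hc
  have e5 : ∀ c : ℕ, 5*d = 4*(5*k) + (c:ℤ) → uu^(5*d) = s0 * uu^c :=
    fun c hc => main 5 c ⟨2, by norm_num⟩ hc
  have e7 : ∀ c : ℕ, 7*d = 4*(7*k) + (c:ℤ) → uu^(7*d) = s0 * uu^c :=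
    fun c hc => main 7 c ⟨3, by norm_num⟩ hc
  have p0 : uu^(0:ℕ) = 1 := pow_zero uu
  have p1 : uu^(1:ℕ) = uu := pow_one uu
  have p2 : uu^(2:ℕ) = Complex.I := uu_sq
  have p3 : uu^(3:ℕ) = Complex.I * uu := by
    rw [show (3:ℕ)=2*1+1 from rfl, uu_hodd, pow_one]
  have p5 : uu^(5:ℕ) = -uu := by
    rw [show (5:ℕ)=2*2+1 from rfl, uu_hodd, Complex.I_sq]; ring
  have p6 : uu^(6:ℕ) = -Complex.I := by
    rw [show (6:ℕ)=2*3 from rfl, uu_heven, pow_succ, Complex.I_sq]; ring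
  have p7 : uu^(7:ℕ) = -(Complex.I * uu) := by
    rw [show (7:ℕ)=2*3+1 from rfl, uu_hodd, pow_succ, Complex.I_sq]; ring
  have p9 : uu^(9:ℕ) = uu := by
    rw [show (9:ℕ)=2*4+1 from rfl, uu_hodd, show (4:ℕ)=2*2 from rfl, pow_mul, Complex.I_sq]; ring
  have p10 : uu^(10:ℕ) = Complex.I := by
    rw [show (10:ℕ)=2*5 from rfl, uu_heven, pow_succ, show (4:ℕ)=2*2 from rfl, pow_mul, Complex.I_sq]; ring
  have p14 : uu^(14:ℕ) = -Complex.I := by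
    rw [show (14:ℕ)=2*7 from rfl, uu_heven, show (7:ℕ)=2*3+1 from rfl, pow_succ, pow_mul, Complex.I_sq]; ring
  have p15 : uu^(15:ℕ) = -(Complex.I * uu) := by
    rw [show (15:ℕ)=2*7+1 from rfl, uu_hodd, show (7:ℕ)=2*3+1 from rfl, pow_succ, pow_mul, Complex.I_sq]; ring
  have p21 : uu^(21:ℕ) = -uu := by
    rw [show (21:ℕ)=2*10+1 from rfl, uu_hodd, show (10:ℕ)=2*5 from rfl, pow_mul, Complex.I_sq]; ring
  interval_cases t
  · rw [if_pos (by omega), e1 0 (by omega), e3 0 (by omega), e5 0 (by omega), e7 0 (by omega),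
      p0]
    ring
  · rw [if_neg (by omega), e1 1 (by omega), e3 3 (by omega), e5 5 (by omega), e7 7 (by omega),
      p1, p3, p5, p7]
    ring
  · rw [if_neg (by omega), e1 2 (by omega), e3 6 (by omega), e5 10 (by omega), e7 14 (by omega),
      p2, p6, p10, p14]
    ring
  · rw [if_neg (by omega), e1 3 (by omega), e3 9 (by omega), e5 15 (by omega), e7 21 (by omega),
      p3, p9, p15, p21]
    ring

lemma exp_eq_tsum' (A : ℂ) : Complex.exp A = ∑' n : ℕ, A^n / n.factorial := by
  rw [Complex.exp_eq_exp_ℂ, NormedSpace.exp_eq_tsum_div]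

lemma summable_exp' (A : ℂ) : Summable (fun n : ℕ => A^n / n.factorial) := by
  have := Real.summable_pow_div_factorial ‖A‖
  apply Summable.of_norm
  apply this.congr
  intro n
  rw [norm_div, norm_pow, Complex.norm_natCast]

lemma summable_bound (c : ℝ) (hc : 0 ≤ c) :
    Summable (fun pq : ℕ × ℕ => c^(pq.1+pq.2) / (pq.1.factorial * pq.2.factorial)) := by
  have h := Real.summable_pow_div_factorial c
  have hnn : 0 ≤ fun n : ℕ => c^n / n.factorial := by
    intro n; positivity
  have := h.mul_of_nonneg h hnn hnn
  apply this.congr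
  intro pq
  rw [pow_add]
  field_simp

lemma summable_of_norm_le_trm (x : ℂ) (g : ℕ × ℕ → ℂ)
    (h : ∀ pq : ℕ × ℕ, ‖g pq‖ ≤ (‖x‖/2)^(pq.1+pq.2) / (pq.1.factorial * pq.2.factorial)) :
    Summable g := by
  apply Summable.of_norm
  exact Summable.of_nonneg_of_le (fun _ => norm_nonneg _) h
    (summable_bound (‖x‖/2) (by positivity))

lemma tsum_expprod (A B : ℂ) :
    ∑' pq : ℕ × ℕ, (A^pq.1 / pq.1.factorial) * (B^pq.2 / pq.2.factorial)
      = Complex.exp A * Complex.exp B := by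
  have hs : Summable (fun pq : ℕ × ℕ => (A^pq.1 / pq.1.factorial) * (B^pq.2 / pq.2.factorial)) := by
    apply Summable.of_norm
    have h1 := Real.summable_pow_div_factorial ‖A‖
    have h2 := Real.summable_pow_div_factorial ‖B‖
    have := h1.mul_of_nonneg h2 (fun n => by positivity) (fun n => by positivity)
    apply this.congr
    intro pq
    rw [norm_mul, norm_div, norm_div, norm_pow, norm_pow, Complex.norm_natCast,
      Complex.norm_natCast]
  rw [hs.tsum_prod]
  calc ∑' p, ∑' q, (A^p / p.factorial : ℂ) * (B^q / q.factorial)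
      = ∑' p : ℕ, (A^p / p.factorial : ℂ) * ∑' q : ℕ, (B^q / q.factorial : ℂ) := by
        apply tsum_congr; intro p; exact tsum_mul_left
    _ = (∑' p : ℕ, (A^p / p.factorial : ℂ)) * ∑' q : ℕ, (B^q / q.factorial : ℂ) := tsum_mul_right
    _ = Complex.exp A * Complex.exp B := by rw [exp_eq_tsum', exp_eq_tsum']
section MainLemma

/-- weight -/
noncomputable def wgt (r : ℤ) (pq : ℕ × ℕ) : ℂ :=
  if ((pq.2:ℤ) - pq.1 - r) % 4 = 0 then (-1:ℂ)^(((pq.2:ℤ) - pq.1 - r)/4) else 0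

/-- index embedding -/
def emb (r : ℤ) (νm : ℤ × ℕ) : ℕ × ℕ :=
  (νm.2 + (-(4*νm.1+r)).toNat, νm.2 + (4*νm.1+r).toNat)

lemma emb_inj (r : ℤ) : Function.Injective (emb r) := by
  rintro ⟨ν, m⟩ ⟨ν', m'⟩ h
  simp only [emb, Prod.mk.injEq] at h
  obtain ⟨h1, h2⟩ := h
  have : ν = ν' ∧ m = m' := by omega
  simp [this.1, this.2]

lemma wgt_emb (r : ℤ) (νm : ℤ × ℕ) : wgt r (emb r νm) = (-1:ℂ)^νm.1 := by
  obtain ⟨ν, m⟩ := νm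
  have hd : (((emb r (ν,m)).2 : ℤ)) - (emb r (ν,m)).1 - r = 4*ν := by
    simp only [emb]; push_cast; omega
  rw [wgt, hd]
  rw [if_pos (by omega), Int.mul_ediv_cancel_left ν (by norm_num)]

lemma support_wgt (r : ℤ) (pq : ℕ × ℕ) (h : wgt r pq ≠ 0) : pq ∈ Set.range (emb r) := by
  obtain ⟨p, q⟩ := pq
  rw [wgt] at h
  by_cases hc : ((q:ℤ) - p - r) % 4 = 0
  · refine ⟨(((q:ℤ) - p - r)/4, min p q), ?_⟩
    have h4 : 4 * (((q:ℤ) - p - r)/4) + r = (q:ℤ) - p := by omega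
    simp only [emb, Prod.mk.injEq]
    constructor <;> omega
  · simp only [if_neg hc, ne_eq, not_true_eq_false] at h

lemma uu_norm : ‖uu‖ = 1 := by
  have h : ‖uu‖^2 = 1 := by rw [← norm_pow, uu_sq, Complex.norm_I]
  nlinarith [norm_nonneg uu]

lemma summable_G (x : ℂ) (s : ℤ) :
    Summable (fun pq : ℕ × ℕ => uu^(s*((pq.2:ℤ) - pq.1)) * trm x pq.1 pq.2) := by
  apply summable_of_norm_le_trm x
  intro pq
  exact le_of_eq (by rw [norm_mul, norm_zpow, uu_norm, one_zpow, one_mul, norm_trm])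

lemma tsum_G (x : ℂ) (s : ℤ) :
    ∑' pq : ℕ × ℕ, uu^(s*((pq.2:ℤ) - pq.1)) * trm x pq.1 pq.2
      = Complex.exp ((uu^s - uu^(-s)) * (x/2)) := by
  have hG : ∀ pq : ℕ × ℕ, uu^(s*((pq.2:ℤ) - pq.1)) * trm x pq.1 pq.2
      = ((-uu^(-s)*(x/2))^pq.1 / pq.1.factorial) * ((uu^s*(x/2))^pq.2 / pq.2.factorial) := by
    intro ⟨p, q⟩
    have h1 : uu^(s*((q:ℤ) - p)) = (uu^s)^q * (uu^(-s))^p := by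
      rw [show s*((q:ℤ) - p) = s*(q:ℤ) + (-s)*(p:ℤ) by ring, zpow_add₀ uu_ne,
        zpow_mul, zpow_mul, zpow_natCast, zpow_natCast]
    rw [h1, trm, pow_add, show -uu^(-s)*(x/2) = (-1) * (uu^(-s)) * (x/2) by ring,
      mul_pow, mul_pow]
    ring
  rw [tsum_congr hG, tsum_expprod, ← Complex.exp_add]
  congr 1
  ring

theorem main_lemma (x : ℂ) (r : ℤ) (hr0 : 0 ≤ r) (hr2 : r ≤ 2) :
    ∑' ν : ℤ, (-1:ℂ)^ν * besselJ (4*ν + r) x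
      = 1/4 * (uu^(-(1*r)) * Complex.exp ((uu^(1:ℤ) - uu^(-1:ℤ)) * (x/2))
             + uu^(-(3*r)) * Complex.exp ((uu^(3:ℤ) - uu^(-3:ℤ)) * (x/2))
             + uu^(-(5*r)) * Complex.exp ((uu^(5:ℤ) - uu^(-5:ℤ)) * (x/2))
             + uu^(-(7*r)) * Complex.exp ((uu^(7:ℤ) - uu^(-7:ℤ)) * (x/2))) := by
  set c : ℝ := ‖x‖/2 with hc
  have hc0 : 0 ≤ c := by positivity
  have hexp2c : ∀ N : ℕ, c^N / N.factorial ≤ Real.exp (2*c) * (1/2:ℝ)^N := by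
    intro N
    have h1 : (2*c)^N / N.factorial ≤ Real.exp (2*c) := by
      have hs := Real.summable_pow_div_factorial (2*c)
      have h2 : (2*c)^N / N.factorial ≤ ∑' n : ℕ, (2*c)^n / n.factorial :=
        Summable.le_tsum hs N (fun j _ => by positivity)
      have h3 : ∑' n : ℕ, (2*c)^n / n.factorial = Real.exp (2*c) := by
        rw [Real.exp_eq_exp_ℝ, NormedSpace.exp_eq_tsum_div]
      linarith
    have h4 : c^N / N.factorial = ((2*c)^N / N.factorial) * (1/2:ℝ)^N := by
      rw [mul_pow]
      field_simp
      rw [mul_assoc, ← mul_pow]; norm_num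
    rw [h4]
    exact mul_le_mul_of_nonneg_right h1 (by positivity)
  -- norm bound for f
  have hfb : ∀ νm : ℤ × ℕ, ‖(-1:ℂ)^νm.1 * trm x (νm.2 + (-(4*νm.1+r)).toNat)
        (νm.2 + (4*νm.1+r).toNat)‖ ≤
      (Real.exp (2*c) * (1/4:ℝ)^νm.1.natAbs) * ((c^2)^νm.2 / νm.2.factorial) := by
    intro ⟨ν, m⟩
    set n := 4*ν + r with hn
    set N := n.natAbs with hN
    have hfac : (m + (-n).toNat).factorial * (m + n.toNat).factorial
        = m.factorial * (m+N).factorial := by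
      rcases le_or_gt 0 n with h | h
      · rw [show m + (-n).toNat = m by omega, show m + n.toNat = m + N by omega]
      · rw [show m + (-n).toNat = m + N by omega, show m + n.toNat = m by omega, mul_comm]
    have hfn : ‖(-1:ℂ)^ν * trm x (m + (-n).toNat) (m + n.toNat)‖
        = c^(2*m+N) / (m.factorial * (m+N).factorial) := by
      rw [norm_mul, norm_zpow, norm_neg, norm_one, one_zpow, one_mul, norm_trm,
        show (m + (-n).toNat) + (m + n.toNat) = 2*m+N by omega]
      congr 1
      exact_mod_cast hfac
    rw [hfn]
    have hNν : 2 * ν.natAbs ≤ N := by omega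
    have key1 : c^(2*m+N) / ((m.factorial : ℝ) * (m+N).factorial)
        ≤ ((c^2)^m / m.factorial) * (c^N / N.factorial) := by
      rw [pow_add, pow_mul, div_mul_div_comm]
      apply div_le_div_of_nonneg_left (by positivity) (by positivity)
      have := Nat.factorial_le (show N ≤ m + N by omega)
      have h2 : (N.factorial:ℝ) ≤ ((m+N).factorial : ℝ) := by exact_mod_cast this
      have h3 : (0:ℝ) < m.factorial := by exact_mod_cast Nat.factorial_pos m
      nlinarith
    have key2 : c^N / N.factorial ≤ Real.exp (2*c) * (1/4:ℝ)^ν.natAbs := by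
      calc c^N / N.factorial ≤ Real.exp (2*c) * (1/2:ℝ)^N := hexp2c N
        _ ≤ Real.exp (2*c) * (1/4:ℝ)^ν.natAbs := by
            apply mul_le_mul_of_nonneg_left ?_ (Real.exp_nonneg _)
            calc (1/2:ℝ)^N ≤ (1/2:ℝ)^(2*ν.natAbs) :=
                pow_le_pow_of_le_one (by norm_num) (by norm_num) hNν
              _ = (1/4:ℝ)^ν.natAbs := by rw [pow_mul]; norm_num
    calc c^(2*m+N) / ((m.factorial : ℝ) * (m+N).factorial)
        ≤ ((c^2)^m / m.factorial) * (c^N / N.factorial) := key1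
      _ ≤ ((c^2)^m / m.factorial) * (Real.exp (2*c) * (1/4:ℝ)^ν.natAbs) :=
          mul_le_mul_of_nonneg_left key2 (by positivity)
      _ = (Real.exp (2*c) * (1/4:ℝ)^ν.natAbs) * ((c^2)^m / m.factorial) := by ring
  have hfs : Summable (fun νm : ℤ × ℕ => (-1:ℂ)^νm.1 * trm x (νm.2 + (-(4*νm.1+r)).toNat)
      (νm.2 + (4*νm.1+r).toNat)) := by
    apply Summable.of_norm
    have hgeo : Summable (fun n : ℕ => (1/4:ℝ)^n) :=
      summable_geometric_of_lt_one (by norm_num) (by norm_num)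
    have hg : Summable (fun ν : ℤ => Real.exp (2*c) * (1/4:ℝ)^ν.natAbs) := by
      apply Summable.mul_left
      apply Summable.of_nat_of_neg <;> simpa using hgeo
    have hh : Summable (fun m : ℕ => ((c^2)^m / m.factorial : ℝ)) :=
      Real.summable_pow_div_factorial _
    have hprod := hg.mul_of_nonneg hh (fun ν => by positivity) (fun m => by positivity)
    exact Summable.of_nonneg_of_le (fun _ => norm_nonneg _) hfb hprod
  -- step 1 : rewrite each besselJ
  have step1 : ∀ ν : ℤ, (-1:ℂ)^ν * besselJ (4*ν + r) x
      = ∑' m : ℕ, (-1:ℂ)^ν * trm x (m + (-(4*ν+r)).toNat) (m + (4*ν+r).toNat) := by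
    intro ν
    rw [besselJ_eq, ← tsum_mul_left]
  -- step 2+3 : to ℕ × ℕ
  have hFe : ∀ νm : ℤ × ℕ, wgt r (emb r νm) * trm x (emb r νm).1 (emb r νm).2
      = (-1:ℂ)^νm.1 * trm x (νm.2 + (-(4*νm.1+r)).toNat) (νm.2 + (4*νm.1+r).toNat) := by
    intro νm
    rw [wgt_emb]
    rfl
  have step23 : ∑' ν : ℤ, (-1:ℂ)^ν * besselJ (4*ν + r) x
      = ∑' pq : ℕ × ℕ, wgt r pq * trm x pq.1 pq.2 := by
    rw [tsum_congr step1, ← hfs.tsum_prod, ← (emb_inj r).tsum_eq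
      (f := fun pq : ℕ × ℕ => wgt r pq * trm x pq.1 pq.2)]
    · exact tsum_congr fun νm => (hFe νm).symm
    · intro pq hpq
      apply support_wgt
      intro h0
      simp [Function.mem_support, h0] at hpq
  rw [step23]
  -- step 4: pointwise split via c_eq
  have step4 : ∀ pq : ℕ × ℕ, wgt r pq * trm x pq.1 pq.2
      = 1/4 * ((uu^(-(1*r)) * (uu^((1:ℤ)*((pq.2:ℤ) - pq.1)) * trm x pq.1 pq.2))
             + (uu^(-(3*r)) * (uu^((3:ℤ)*((pq.2:ℤ) - pq.1)) * trm x pq.1 pq.2))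
             + (uu^(-(5*r)) * (uu^((5:ℤ)*((pq.2:ℤ) - pq.1)) * trm x pq.1 pq.2))
             + (uu^(-(7*r)) * (uu^((7:ℤ)*((pq.2:ℤ) - pq.1)) * trm x pq.1 pq.2))) := by
    intro ⟨p, q⟩
    have hw : wgt r (p, q) = 1/4 * (uu^((q:ℤ) - p - r) + uu^(3*((q:ℤ) - p - r))
        + uu^(5*((q:ℤ) - p - r)) + uu^(7*((q:ℤ) - p - r))) := by
      rw [wgt]
      exact c_eq ((q:ℤ) - p - r)
    have hsd : ∀ s : ℤ, uu^(s*((q:ℤ) - p - r)) = uu^(-(s*r)) * uu^(s*((q:ℤ) - p)) := by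
      intro s
      rw [show s*((q:ℤ) - p - r) = -(s*r) + s*((q:ℤ) - p) by ring, zpow_add₀ uu_ne]
    have hsd1 : uu^((q:ℤ) - p - r) = uu^(-(1*r)) * uu^((1:ℤ)*((q:ℤ) - p)) := by
      rw [show ((q:ℤ) - p - r) = (1:ℤ)*((q:ℤ) - p - r) by ring, hsd]
    rw [hw, hsd1, hsd 3, hsd 5, hsd 7]
    ring
  rw [tsum_congr step4, tsum_mul_left]
  have hsum1 := (summable_G x 1).mul_left (uu^(-(1*r)))
  have hsum3 := (summable_G x 3).mul_left (uu^(-(3*r)))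
  have hsum5 := (summable_G x 5).mul_left (uu^(-(5*r)))
  have hsum7 := (summable_G x 7).mul_left (uu^(-(7*r)))
  rw [Summable.tsum_add ((hsum1.add hsum3).add hsum5) hsum7,
      Summable.tsum_add (hsum1.add hsum3) hsum5, Summable.tsum_add hsum1 hsum3,
      tsum_mul_left, tsum_mul_left, tsum_mul_left, tsum_mul_left,
      tsum_G x 1, tsum_G x 3, tsum_G x 5, tsum_G x 7]

end MainLemma

section Values

lemma uu_inv : uu⁻¹ = (1 - Complex.I) / ((Real.sqrt 2 : ℝ) : ℂ) := by
  apply inv_eq_of_mul_eq_one_right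
  rw [uu, div_mul_div_comm]
  rw [div_eq_one_iff_eq (by simpa using (mul_ne_zero sq2_ne sq2_ne))]
  have h1 := Complex.I_sq
  have h2 := sq2_sq
  linear_combination (-1)*h1 - h2

lemma uuP3 : uu^(3:ℕ) = Complex.I * uu := by
  rw [show (3:ℕ)=2*1+1 from rfl, uu_hodd, pow_one]
lemma uuP5 : uu^(5:ℕ) = -uu := by
  rw [show (5:ℕ)=2*2+1 from rfl, uu_hodd, Complex.I_sq]; ring
lemma uuP6 : uu^(6:ℕ) = -Complex.I := by
  rw [show (6:ℕ)=2*3 from rfl, uu_heven, pow_succ, Complex.I_sq]; ring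
lemma uuP7 : uu^(7:ℕ) = -(Complex.I * uu) := by
  rw [show (7:ℕ)=2*3+1 from rfl, uu_hodd, pow_succ, Complex.I_sq]; ring
lemma uuP10 : uu^(10:ℕ) = Complex.I := by
  rw [show (10:ℕ)=2*5 from rfl, uu_heven, pow_succ, show (4:ℕ)=2*2 from rfl, pow_mul,
    Complex.I_sq]; ring
lemma uuP14 : uu^(14:ℕ) = -Complex.I := by
  rw [show (14:ℕ)=2*7 from rfl, uu_heven, show (7:ℕ)=2*3+1 from rfl, pow_succ, pow_mul,
    Complex.I_sq]; ring

lemma uuZ1 : uu^(1:ℤ) = uu := zpow_one uu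
lemma uuZ3 : uu^(3:ℤ) = Complex.I * uu := by
  have : uu^(3:ℤ) = uu^(3:ℕ) := by norm_cast
  rw [this, uuP3]
lemma uuZ5 : uu^(5:ℤ) = -uu := by
  have : uu^(5:ℤ) = uu^(5:ℕ) := by norm_cast
  rw [this, uuP5]
lemma uuZ7 : uu^(7:ℤ) = -(Complex.I * uu) := by
  have : uu^(7:ℤ) = uu^(7:ℕ) := by norm_cast
  rw [this, uuP7]

lemma uuN1 : uu^(-1:ℤ) = uu⁻¹ := by rw [zpow_neg, zpow_one]
lemma uuN2 : uu^(-2:ℤ) = -Complex.I := by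
  rw [zpow_neg, show uu^(2:ℤ) = uu^(2:ℕ) by norm_cast, uu_sq, Complex.inv_I]
lemma uuN3 : uu^(-3:ℤ) = -(Complex.I * uu⁻¹) := by
  rw [zpow_neg, show uu^(3:ℤ) = uu^(3:ℕ) by norm_cast, uuP3, mul_inv, Complex.inv_I]; ring
lemma uuN5 : uu^(-5:ℤ) = -uu⁻¹ := by
  rw [zpow_neg, show uu^(5:ℤ) = uu^(5:ℕ) by norm_cast, uuP5, inv_neg]
lemma uuN6 : uu^(-6:ℤ) = Complex.I := by
  rw [zpow_neg, show uu^(6:ℤ) = uu^(6:ℕ) by norm_cast, uuP6, inv_neg, Complex.inv_I]; ring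
lemma uuN7 : uu^(-7:ℤ) = Complex.I * uu⁻¹ := by
  rw [zpow_neg, show uu^(7:ℤ) = uu^(7:ℕ) by norm_cast, uuP7, inv_neg, mul_inv, Complex.inv_I]
  ring
lemma uuN10 : uu^(-10:ℤ) = -Complex.I := by
  rw [zpow_neg, show uu^(10:ℤ) = uu^(10:ℕ) by norm_cast, uuP10, Complex.inv_I]
lemma uuN14 : uu^(-14:ℤ) = Complex.I := by
  rw [zpow_neg, show uu^(14:ℤ) = uu^(14:ℕ) by norm_cast, uuP14, inv_neg, Complex.inv_I]; ring

lemma arg1 (x : ℂ) : (uu - uu⁻¹) * (x/2) = x/((Real.sqrt 2:ℝ):ℂ) * Complex.I := by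
  rw [uu_inv, uu]
  field_simp
  ring
lemma arg3 (x : ℂ) : (Complex.I * uu - -(Complex.I * uu⁻¹)) * (x/2)
    = x/((Real.sqrt 2:ℝ):ℂ) * Complex.I := by
  rw [uu_inv, uu]
  field_simp
  ring
lemma arg5 (x : ℂ) : (-uu - -uu⁻¹) * (x/2) = -(x/((Real.sqrt 2:ℝ):ℂ) * Complex.I) := by
  rw [uu_inv, uu]
  field_simp
  ring
lemma arg7 (x : ℂ) : (-(Complex.I * uu) - Complex.I * uu⁻¹) * (x/2)
    = -(x/((Real.sqrt 2:ℝ):ℂ) * Complex.I) := by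
  rw [uu_inv, uu]
  field_simp
  ring

end Values

theorem stmt_11 (x : ℂ) :
    (∑' ν : ℤ, (-1 : ℂ) ^ ν * besselJ (4 * ν) x = Complex.cos (x / (Real.sqrt 2 : ℝ))) ∧
    (∑' ν : ℤ, (-1 : ℂ) ^ ν * besselJ (4 * ν + 1) x
        = (1 / (Real.sqrt 2 : ℂ)) * Complex.sin (x / (Real.sqrt 2 : ℝ))) ∧
    (∑' ν : ℤ, (-1 : ℂ) ^ ν * besselJ (4 * ν + 2) x = 0) := by
  refine ⟨?_, ?_, ?_⟩
  · have h := main_lemma x 0 (by norm_num) (by norm_num)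
    simp only [add_zero, mul_zero, neg_zero, zpow_zero, one_mul] at h
    rw [h, uuZ1, uuN1, uuZ3, uuN3, uuZ5, uuN5, uuZ7, uuN7,
      arg1, arg3, arg5, arg7, Complex.cos]
    rw [show -(x/((Real.sqrt 2:ℝ):ℂ)) * Complex.I = -(x/((Real.sqrt 2:ℝ):ℂ) * Complex.I) by ring]
    ring
  · have h := main_lemma x 1 (by norm_num) (by norm_num)
    norm_num only at h
    rw [h, uuZ1, uuN1, uuZ3, uuN3, uuZ5, uuN5, uuZ7, uuN7,
      arg1, arg3, arg5, arg7, Complex.sin]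
    rw [show -(x/((Real.sqrt 2:ℝ):ℂ)) * Complex.I = -(x/((Real.sqrt 2:ℝ):ℂ) * Complex.I) by ring]
    rw [uu_inv]
    field_simp
    ring_nf
    rw [Complex.I_sq]
    ring
  · have h := main_lemma x 2 (by norm_num) (by norm_num)
    norm_num only at h
    rw [h, uuZ1, uuN2, uuZ3, uuN6, uuZ5, uuN10, uuZ7, uuN14,
      uuN1, uuN3, uuN5, uuN7, arg1, arg3, arg5, arg7]
    ring
end

section
/- For every complex number x, ∑_{ν ∈ ℤ} (-1)^ν J_{6ν}(x) = (1/3)[cos x + 2 cos(x/2)], ∑_{ν ∈ ℤ} (-1)^ν J_{6ν+1}(x) = (1/3)[sin x + sin(x/2)], ∑_{ν ∈ ℤ} (-1)^ν J_{6ν+2}(x) = −(1/3)[cos x − cos(x/2)], and ∑_{ν ∈ ℤ} (-1)^ν J_{6ν+3}(x) = −(1/3)[sin x − 2 sin(x/2)]. -/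
open scoped Real

set_option maxHeartbeats 1000000
namespace BesselAux

lemma exp_tsum (z : ℂ) : Complex.exp z = ∑' n : ℕ, z ^ n / n.factorial := by
  rw [Complex.exp_eq_exp_ℂ, NormedSpace.exp_eq_tsum_div]

/-- reindexing equivalence -/
def e : ℤ × ℕ ≃ ℕ × ℕ where
  toFun p := (p.2 + p.1.toNat, p.2 + (-p.1).toNat)
  invFun q := ((q.1 : ℤ) - (q.2 : ℤ), min q.1 q.2)
  left_inv p := by
    obtain ⟨n, m⟩ := p
    simp only [Prod.mk.injEq]
    constructor <;> omega
  right_inv q := by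
    obtain ⟨a, b⟩ := q
    simp only [Prod.mk.injEq]
    constructor <;> omega

lemma term1 (x t : ℂ) (ht : t ≠ 0) (m a : ℕ) :
    ((x * t / 2) ^ (m + a) / ((m + a).factorial : ℂ)) * ((-(x / (2 * t))) ^ m / (m.factorial : ℂ))
      = (-1 : ℂ) ^ m / ((m.factorial : ℂ) * ((m + a).factorial : ℂ)) * (x / 2) ^ (2 * m + a)
        * t ^ a := by
  have h1 : (-(x / (2 * t))) ^ m = (-1 : ℂ) ^ m * x ^ m / (2 ^ m * t ^ m) := by
    rw [neg_pow, div_pow, mul_pow]; ring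
  have h2 : (x * t / 2) ^ (m + a) = x ^ (m + a) * (t ^ m * t ^ a) / 2 ^ (m + a) := by
    rw [div_pow, mul_pow, pow_add]; ring
  rw [h1, h2, div_pow]
  have h3 : (t : ℂ) ^ m ≠ 0 := pow_ne_zero _ ht
  have h4 : ((m.factorial : ℂ)) ≠ 0 := Nat.cast_ne_zero.mpr m.factorial_ne_zero
  have h5 : (((m + a).factorial : ℂ)) ≠ 0 := Nat.cast_ne_zero.mpr (m + a).factorial_ne_zero
  field_simp
  ring

lemma term2 (x t : ℂ) (ht : t ≠ 0) (m b : ℕ) :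
    ((x * t / 2) ^ m / (m.factorial : ℂ)) * ((-(x / (2 * t))) ^ (m + b) / ((m + b).factorial : ℂ))
      = (-1 : ℂ) ^ m / ((m.factorial : ℂ) * ((m + b).factorial : ℂ)) * (x / 2) ^ (2 * m + b)
        * ((-1 : ℂ) ^ b * (t ^ b)⁻¹) := by
  have h1 : (-(x / (2 * t))) ^ (m + b)
      = (-1 : ℂ) ^ m * (-1 : ℂ) ^ b * x ^ (m + b) / (2 ^ (m + b) * (t ^ m * t ^ b)) := by
    rw [neg_pow, div_pow, mul_pow, pow_add, pow_add]; ring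
  have h2 : (x * t / 2) ^ m = x ^ m * t ^ m / 2 ^ m := by
    rw [div_pow, mul_pow]
  have h3 : (t : ℂ) ^ m ≠ 0 := pow_ne_zero _ ht
  have h3b : (t : ℂ) ^ b ≠ 0 := pow_ne_zero _ ht
  have h4 : ((m.factorial : ℂ)) ≠ 0 := Nat.cast_ne_zero.mpr m.factorial_ne_zero
  have h5 : (((m + b).factorial : ℂ)) ≠ 0 := Nat.cast_ne_zero.mpr (m + b).factorial_ne_zero
  have hL : ((x * t / 2) ^ m / (m.factorial : ℂ))
        * ((-(x / (2 * t))) ^ (m + b) / ((m + b).factorial : ℂ))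
      = (x ^ m * t ^ m * ((-1 : ℂ) ^ m * (-1 : ℂ) ^ b * x ^ (m + b)))
        / ((2 ^ m * (m.factorial : ℂ)) * (2 ^ (m + b) * (t ^ m * t ^ b) * ((m + b).factorial : ℂ))) := by
    rw [h1, h2]
    field_simp
  have hR : (-1 : ℂ) ^ m / ((m.factorial : ℂ) * ((m + b).factorial : ℂ)) * (x / 2) ^ (2 * m + b)
        * ((-1 : ℂ) ^ b * (t ^ b)⁻¹)
      = ((-1 : ℂ) ^ m * x ^ (2 * m + b) * (-1 : ℂ) ^ b)
        / ((m.factorial : ℂ) * ((m + b).factorial : ℂ) * 2 ^ (2 * m + b) * t ^ b) := by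
    rw [div_pow]
    field_simp
  have d1 : (2 ^ m * (m.factorial : ℂ)) * (2 ^ (m + b) * (t ^ m * t ^ b) * ((m + b).factorial : ℂ)) ≠ 0 := by
    apply mul_ne_zero (mul_ne_zero (by norm_num) h4)
    exact mul_ne_zero (mul_ne_zero (by norm_num) (mul_ne_zero h3 h3b)) h5
  have d2 : (m.factorial : ℂ) * ((m + b).factorial : ℂ) * 2 ^ (2 * m + b) * t ^ b ≠ 0 :=
    mul_ne_zero (mul_ne_zero (mul_ne_zero h4 h5) (by norm_num)) h3b
  rw [hL, hR, div_eq_div_iff d1 d2]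
  ring

lemma gen (x t : ℂ) (ht : t ≠ 0) :
    HasSum (fun n : ℤ => besselJ n x * t ^ n)
      (Complex.exp (x * t / 2) * Complex.exp (-(x / (2 * t)))) := by
  set F : ℕ × ℕ → ℂ := fun p =>
    ((x * t / 2) ^ p.1 / (p.1.factorial : ℂ)) * ((-(x / (2 * t))) ^ p.2 / (p.2.factorial : ℂ))
    with hFdef
  have hn1 : Summable fun n : ℕ => ‖(x * t / 2) ^ n / (n.factorial : ℂ)‖ :=
    NormedSpace.norm_expSeries_div_summable _
  have hn2 : Summable fun n : ℕ => ‖(-(x / (2 * t))) ^ n / (n.factorial : ℂ)‖ :=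
    NormedSpace.norm_expSeries_div_summable _
  have hF : Summable F := by
    have h := summable_mul_of_summable_norm hn1 hn2
    exact h
  have hval : ∑' p : ℕ × ℕ, F p
      = Complex.exp (x * t / 2) * Complex.exp (-(x / (2 * t))) := by
    rw [exp_tsum, exp_tsum]
    have h := tsum_mul_tsum_of_summable_norm hn1 hn2
    exact h.symm
  have hFsum : HasSum F (Complex.exp (x * t / 2) * Complex.exp (-(x / (2 * t)))) := by
    have := hF.hasSum
    rwa [hval] at this
  have hGsum : HasSum (F ∘ e) (Complex.exp (x * t / 2) * Complex.exp (-(x / (2 * t)))) :=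
    (Equiv.hasSum_iff e).mpr hFsum
  have hG : Summable (F ∘ e) := hGsum.summable
  refine hGsum.prod_fiberwise fun n => ?_
  have hinner : Summable fun m : ℕ => (F ∘ e) (n, m) := hG.prod_factor n
  have h2 : HasSum (fun m : ℕ => (F ∘ e) (n, m)) (∑' m : ℕ, (F ∘ e) (n, m)) := hinner.hasSum
  rcases le_or_gt 0 n with hn | hn
  · set a := n.toNat with ha
    have hneg : (-n).toNat = 0 := by omega
    have hJ : besselJ n x = besselJNat a x := by rw [besselJ, if_pos hn]
    have ht' : t ^ n = t ^ a := by
      rw [show n = (a : ℤ) by omega, zpow_natCast]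
    have key : ∑' m : ℕ, (F ∘ e) (n, m) = besselJ n x * t ^ n := by
      rw [hJ, ht', besselJNat, ← tsum_mul_right]
      refine tsum_congr fun m => ?_
      simp only [Function.comp_apply, hFdef, e, Equiv.coe_fn_mk, hneg, ← ha, add_zero]
      exact term1 x t ht m a
    rwa [key] at h2
  · set b := (-n).toNat with hb
    have hpos : n.toNat = 0 := by omega
    have habs : n.natAbs = b := by omega
    have hJ : besselJ n x = (-1 : ℂ) ^ b * besselJNat b x := by
      rw [besselJ, if_neg (by omega), habs]
    have ht' : t ^ n = (t ^ b)⁻¹ := by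
      rw [show n = -(b : ℤ) by omega, zpow_neg, zpow_natCast]
    have key : ∑' m : ℕ, (F ∘ e) (n, m) = besselJ n x * t ^ n := by
      rw [hJ, ht', besselJNat, mul_comm ((-1 : ℂ) ^ b), mul_assoc, ← tsum_mul_right]
      refine tsum_congr fun m => ?_
      simp only [Function.comp_apply, hFdef, e, Equiv.coe_fn_mk, hpos, ← hb, add_zero]
      exact term2 x t ht m b
    rwa [key] at h2
noncomputable def ζ : ℂ := Complex.exp (Real.pi * Complex.I / 6)

lemma hζ0 : ζ ≠ 0 := Complex.exp_ne_zero _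

lemma hs : ((Real.sqrt 3 : ℝ) : ℂ) ^ 2 = 3 := by
  rw [← Complex.ofReal_pow, Real.sq_sqrt (by norm_num : (3:ℝ) ≥ 0)]
  norm_num

lemma z1 : ζ = (((Real.sqrt 3 : ℝ) : ℂ) + Complex.I) / 2 := by
  rw [ζ, show (Real.pi : ℂ) * Complex.I / 6 = ((Real.pi / 6 : ℝ) : ℂ) * Complex.I by
    push_cast; ring, Complex.exp_mul_I, ← Complex.ofReal_cos, ← Complex.ofReal_sin,
    Real.cos_pi_div_six, Real.sin_pi_div_six]
  push_cast
  ring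

lemma z2 : ζ ^ 2 = (1 + ((Real.sqrt 3 : ℝ) : ℂ) * Complex.I) / 2 := by
  rw [z1]; linear_combination (1/4 : ℂ) * hs + (1/4 : ℂ) * Complex.I_sq

lemma z3 : ζ ^ 3 = Complex.I := by
  have h : ζ ^ 3 = ζ * ζ ^ 2 := by ring
  rw [h, z2, z1]
  linear_combination (Complex.I / 4) * hs + (((Real.sqrt 3 : ℝ) : ℂ) / 4) * Complex.I_sq
lemma z6 : ζ ^ 6 = -1 := by
  have h : ζ ^ 6 = (ζ ^ 3) ^ 2 := by ring
  rw [h, z3, Complex.I_sq]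
lemma z12 : ζ ^ 12 = 1 := by
  have h : ζ ^ 12 = (ζ ^ 6) ^ 2 := by ring
  rw [h, z6]; norm_num
lemma z5 : ζ ^ 5 = (Complex.I - ((Real.sqrt 3 : ℝ) : ℂ)) / 2 := by
  have h : ζ ^ 5 = ζ ^ 2 * ζ ^ 3 := by ring
  rw [h, z2, z3]
  linear_combination (((Real.sqrt 3 : ℝ) : ℂ) / 2) * Complex.I_sq
lemma z7 : ζ ^ 7 = -((((Real.sqrt 3 : ℝ) : ℂ) + Complex.I) / 2) := by
  have h : ζ ^ 7 = ζ ^ 6 * ζ := by ring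
  rw [h, z6, z1]; ring
lemma z9 : ζ ^ 9 = -Complex.I := by
  have h : ζ ^ 9 = ζ ^ 6 * ζ ^ 3 := by ring
  rw [h, z6, z3]; ring
lemma z10 : ζ ^ 10 = (1 - ((Real.sqrt 3 : ℝ) : ℂ) * Complex.I) / 2 := by
  have h : ζ ^ 10 = (ζ ^ 5) ^ 2 := by ring
  rw [h, z5]
  linear_combination (1/4 : ℂ) * hs + (1/4 : ℂ) * Complex.I_sq
lemma z11 : ζ ^ 11 = (((Real.sqrt 3 : ℝ) : ℂ) - Complex.I) / 2 := by
  have h : ζ ^ 11 = ζ ^ 6 * ζ ^ 5 := by ring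
  rw [h, z6, z5]; ring

lemma zζ2 : ζ * ζ - 1 = Complex.I * ζ := by
  rw [z1]; linear_combination (1/4 : ℂ) * hs - (1/4 : ℂ) * Complex.I_sq

/-- reduce integer powers of ζ -/
lemma zred (a : ℤ) (b : ℕ) (c : ℤ) (h : a = (b : ℤ) + 12 * c) : ζ ^ a = ζ ^ b := by
  rw [h, zpow_add₀ hζ0, zpow_natCast, show (12 : ℤ) * c = (12 : ℤ) * c from rfl]
  rw [zpow_mul, show (ζ ^ (12:ℤ)) = 1 by rw [show (12:ℤ) = ((12:ℕ):ℤ) by norm_num, zpow_natCast, z12]]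
  simp

lemma hj (m : ℤ) (j : ℕ) : ζ ^ ((j : ℤ) * m) = (ζ ^ m) ^ j := by
  rw [mul_comm, zpow_mul, zpow_natCast]

lemma chi_ndvd (m : ℤ) (h : ¬ (6:ℤ) ∣ m) :
    ζ^(1*m) + ζ^(3*m) + ζ^(5*m) + ζ^(7*m) + ζ^(9*m) + ζ^(11*m) = 0 := by
  set u := ζ ^ m with hu
  have h1 : ζ^(1*m) = u ^ 1 := by rw [show (1:ℤ) = ((1:ℕ):ℤ) by norm_num, hj]
  have h3 : ζ^(3*m) = u ^ 3 := by rw [show (3:ℤ) = ((3:ℕ):ℤ) by norm_num, hj]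
  have h5 : ζ^(5*m) = u ^ 5 := by rw [show (5:ℤ) = ((5:ℕ):ℤ) by norm_num, hj]
  have h7 : ζ^(7*m) = u ^ 7 := by rw [show (7:ℤ) = ((7:ℕ):ℤ) by norm_num, hj]
  have h9 : ζ^(9*m) = u ^ 9 := by rw [show (9:ℤ) = ((9:ℕ):ℤ) by norm_num, hj]
  have h11 : ζ^(11*m) = u ^ 11 := by rw [show (11:ℤ) = ((11:ℕ):ℤ) by norm_num, hj]
  have hu12 : u ^ 12 = 1 := by
    rw [hu, ← zpow_natCast (ζ^m) 12, ← zpow_mul,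
      show m * ((12:ℕ):ℤ) = ((12:ℕ):ℤ) * m by ring, zpow_mul, zpow_natCast, z12, one_zpow]
  have hu2 : u ^ 2 ≠ 1 := by
    intro heq
    rw [hu, ← hj m 2] at heq
    have hζdef : ζ = Complex.exp (Real.pi * Complex.I / 6) := rfl
    rw [hζdef, ← Complex.exp_int_mul] at heq
    obtain ⟨N, hN⟩ := Complex.exp_eq_one_iff.mp heq
    have hπI : (Real.pi : ℂ) * Complex.I ≠ 0 :=
      mul_ne_zero (Complex.ofReal_ne_zero.mpr Real.pi_ne_zero) Complex.I_ne_zero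
    have hz : ((m : ℂ) - 6 * N) * ((Real.pi : ℂ) * Complex.I) = 0 := by
      push_cast at hN ⊢
      linear_combination 3 * hN
    have : (m : ℂ) = 6 * N := by
      have h0 := (mul_eq_zero.mp hz).resolve_right hπI
      linear_combination h0
    exact h ⟨N, by exact_mod_cast this⟩
  have key : (u^2 - 1) * (1 + u^2 + u^4 + u^6 + u^8 + u^10) = u^12 - 1 := by ring
  rw [hu12, sub_self] at key
  have hzero : 1 + u^2 + u^4 + u^6 + u^8 + u^10 = 0 :=
    (mul_eq_zero.mp key).resolve_left (sub_ne_zero.mpr hu2)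
  rw [h1, h3, h5, h7, h9, h11]
  linear_combination u * hzero

lemma chi_dvd (ν : ℤ) :
    ζ^(1*(6*ν)) + ζ^(3*(6*ν)) + ζ^(5*(6*ν)) + ζ^(7*(6*ν)) + ζ^(9*(6*ν)) + ζ^(11*(6*ν))
      = 6 * (-1:ℂ) ^ ν := by
  have hterm : ∀ j c : ℤ, j = 2 * c + 1 → ζ ^ (j * (6 * ν)) = (-1:ℂ) ^ ν := by
    intro j c hc
    have hν0 : ((-1:ℂ)) ^ ν ≠ 0 := zpow_ne_zero _ (by norm_num)
    rw [show j * (6*ν) = 6 * (j * ν) by ring, zpow_mul,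
      show (6:ℤ) = ((6:ℕ):ℤ) by norm_num, zpow_natCast, z6,
      show j * ν = ν * j by ring, zpow_mul, hc]
    have hsq : ((-1:ℂ) ^ ν) ^ (2:ℤ) = 1 := by
      rw [← zpow_mul, show ν * 2 = 2 * ν by ring, zpow_mul,
        show ((-1:ℂ)) ^ (2:ℤ) = 1 by norm_num, one_zpow]
    rw [zpow_add₀ hν0, zpow_mul, hsq, one_zpow, one_mul, zpow_one]
  rw [hterm 1 0 (by norm_num), hterm 3 1 (by norm_num), hterm 5 2 (by norm_num),
    hterm 7 3 (by norm_num), hterm 9 4 (by norm_num), hterm 11 5 (by norm_num)]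
  ring

lemma arg_eq (x t c : ℂ) (ht : t ≠ 0) (h : t * t - 1 = c * t) :
    Complex.exp (x * t / 2) * Complex.exp (-(x / (2 * t))) = Complex.exp (x * c / 2) := by
  rw [← Complex.exp_add]
  congr 1
  field_simp
  linear_combination x * h

lemma master (x : ℂ) (k : ℤ) :
    ∑' ν : ℤ, (-1 : ℂ) ^ ν * besselJ (6 * ν + k) x
      = (ζ ^ (-(1*k)) * Complex.exp (x * Complex.I / 2)
        + ζ ^ (-(3*k)) * Complex.exp (x * Complex.I)
        + ζ ^ (-(5*k)) * Complex.exp (x * Complex.I / 2)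
        + ζ ^ (-(7*k)) * Complex.exp (-(x * Complex.I / 2))
        + ζ ^ (-(9*k)) * Complex.exp (-(x * Complex.I))
        + ζ ^ (-(11*k)) * Complex.exp (-(x * Complex.I / 2))) / 6 := by
  have hne : ∀ j : ℕ, (ζ ^ j : ℂ) ≠ 0 := fun j => pow_ne_zero _ hζ0
  have H1 := gen x (ζ ^ (1:ℕ)) (hne 1)
  rw [arg_eq x _ Complex.I (hne 1) (by rw [pow_one]; exact zζ2)] at H1
  have H3 := gen x (ζ ^ (3:ℕ)) (hne 3)
  rw [arg_eq x _ (2 * Complex.I) (hne 3)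
      (by rw [z3]; linear_combination (-1 : ℂ) * Complex.I_sq),
    show x * (2 * Complex.I) / 2 = x * Complex.I by ring] at H3
  have H5 := gen x (ζ ^ (5:ℕ)) (hne 5)
  rw [arg_eq x _ Complex.I (hne 5)
      (by rw [z5]; linear_combination (1/4 : ℂ) * hs - (1/4 : ℂ) * Complex.I_sq)] at H5
  have H7 := gen x (ζ ^ (7:ℕ)) (hne 7)
  rw [arg_eq x _ (-Complex.I) (hne 7)
      (by rw [z7]; linear_combination (1/4 : ℂ) * hs - (1/4 : ℂ) * Complex.I_sq),
    show x * -Complex.I / 2 = -(x * Complex.I / 2) by ring] at H7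
  have H9 := gen x (ζ ^ (9:ℕ)) (hne 9)
  rw [arg_eq x _ (-(2 * Complex.I)) (hne 9)
      (by rw [z9]; linear_combination (-1 : ℂ) * Complex.I_sq),
    show x * -(2 * Complex.I) / 2 = -(x * Complex.I) by ring] at H9
  have H11 := gen x (ζ ^ (11:ℕ)) (hne 11)
  rw [arg_eq x _ (-Complex.I) (hne 11)
      (by rw [z11]; linear_combination (1/4 : ℂ) * hs - (1/4 : ℂ) * Complex.I_sq),
    show x * -Complex.I / 2 = -(x * Complex.I / 2) by ring] at H11
  have HS : HasSum (fun n : ℤ =>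
      (ζ ^ (-(1*k)) * (besselJ n x * (ζ ^ (1:ℕ)) ^ n)
        + ζ ^ (-(3*k)) * (besselJ n x * (ζ ^ (3:ℕ)) ^ n)
        + ζ ^ (-(5*k)) * (besselJ n x * (ζ ^ (5:ℕ)) ^ n)
        + ζ ^ (-(7*k)) * (besselJ n x * (ζ ^ (7:ℕ)) ^ n)
        + ζ ^ (-(9*k)) * (besselJ n x * (ζ ^ (9:ℕ)) ^ n)
        + ζ ^ (-(11*k)) * (besselJ n x * (ζ ^ (11:ℕ)) ^ n)) / 6)
      ((ζ ^ (-(1*k)) * Complex.exp (x * Complex.I / 2)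
        + ζ ^ (-(3*k)) * Complex.exp (x * Complex.I)
        + ζ ^ (-(5*k)) * Complex.exp (x * Complex.I / 2)
        + ζ ^ (-(7*k)) * Complex.exp (-(x * Complex.I / 2))
        + ζ ^ (-(9*k)) * Complex.exp (-(x * Complex.I))
        + ζ ^ (-(11*k)) * Complex.exp (-(x * Complex.I / 2))) / 6) :=
    ((((((H1.mul_left (ζ ^ (-(1*k)))).add (H3.mul_left (ζ ^ (-(3*k))))).add
      (H5.mul_left (ζ ^ (-(5*k))))).add (H7.mul_left (ζ ^ (-(7*k))))).add
      (H9.mul_left (ζ ^ (-(9*k))))).add (H11.mul_left (ζ ^ (-(11*k))))).div_const 6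
  -- pointwise rewriting of the summed function
  have hterm : ∀ (jz : ℤ) (j : ℕ), (j : ℤ) = jz → ∀ n m : ℤ, n - k = m →
      ζ ^ (-(jz*k)) * (ζ ^ j) ^ n = ζ ^ (jz * m) := by
    intro jz j hj n m hm
    rw [← zpow_natCast ζ j, hj, ← zpow_mul, ← zpow_add₀ hζ0]
    congr 1
    linear_combination jz * hm
  have hpt : ∀ n m : ℤ, n - k = m →
      (ζ ^ (-(1*k)) * (besselJ n x * (ζ ^ (1:ℕ)) ^ n)
        + ζ ^ (-(3*k)) * (besselJ n x * (ζ ^ (3:ℕ)) ^ n)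
        + ζ ^ (-(5*k)) * (besselJ n x * (ζ ^ (5:ℕ)) ^ n)
        + ζ ^ (-(7*k)) * (besselJ n x * (ζ ^ (7:ℕ)) ^ n)
        + ζ ^ (-(9*k)) * (besselJ n x * (ζ ^ (9:ℕ)) ^ n)
        + ζ ^ (-(11*k)) * (besselJ n x * (ζ ^ (11:ℕ)) ^ n)) / 6
      = besselJ n x *
          (ζ^(1*m) + ζ^(3*m) + ζ^(5*m) + ζ^(7*m) + ζ^(9*m) + ζ^(11*m)) / 6 := by
    intro n m hm
    rw [show ζ ^ (-(1*k)) * (besselJ n x * (ζ ^ (1:ℕ)) ^ n)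
        = besselJ n x * (ζ ^ (-(1*k)) * (ζ ^ (1:ℕ)) ^ n) by ring,
      show ζ ^ (-(3*k)) * (besselJ n x * (ζ ^ (3:ℕ)) ^ n)
        = besselJ n x * (ζ ^ (-(3*k)) * (ζ ^ (3:ℕ)) ^ n) by ring,
      show ζ ^ (-(5*k)) * (besselJ n x * (ζ ^ (5:ℕ)) ^ n)
        = besselJ n x * (ζ ^ (-(5*k)) * (ζ ^ (5:ℕ)) ^ n) by ring,
      show ζ ^ (-(7*k)) * (besselJ n x * (ζ ^ (7:ℕ)) ^ n)
        = besselJ n x * (ζ ^ (-(7*k)) * (ζ ^ (7:ℕ)) ^ n) by ring,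
      show ζ ^ (-(9*k)) * (besselJ n x * (ζ ^ (9:ℕ)) ^ n)
        = besselJ n x * (ζ ^ (-(9*k)) * (ζ ^ (9:ℕ)) ^ n) by ring,
      show ζ ^ (-(11*k)) * (besselJ n x * (ζ ^ (11:ℕ)) ^ n)
        = besselJ n x * (ζ ^ (-(11*k)) * (ζ ^ (11:ℕ)) ^ n) by ring,
      hterm 1 1 (by norm_num) n m hm, hterm 3 3 (by norm_num) n m hm,
      hterm 5 5 (by norm_num) n m hm, hterm 7 7 (by norm_num) n m hm,
      hterm 9 9 (by norm_num) n m hm, hterm 11 11 (by norm_num) n m hm]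
    ring
  have hinj : Function.Injective (fun ν : ℤ => 6 * ν + k) := by
    intro a b hab
    simp only [] at hab
    omega
  have hsupp : Function.support (fun n : ℤ =>
      (ζ ^ (-(1*k)) * (besselJ n x * (ζ ^ (1:ℕ)) ^ n)
        + ζ ^ (-(3*k)) * (besselJ n x * (ζ ^ (3:ℕ)) ^ n)
        + ζ ^ (-(5*k)) * (besselJ n x * (ζ ^ (5:ℕ)) ^ n)
        + ζ ^ (-(7*k)) * (besselJ n x * (ζ ^ (7:ℕ)) ^ n)
        + ζ ^ (-(9*k)) * (besselJ n x * (ζ ^ (9:ℕ)) ^ n)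
        + ζ ^ (-(11*k)) * (besselJ n x * (ζ ^ (11:ℕ)) ^ n)) / 6)
      ⊆ Set.range (fun ν : ℤ => 6 * ν + k) := by
    intro n hn
    by_contra hr
    apply hn
    have hnd : ¬ (6:ℤ) ∣ (n - k) := by
      rintro ⟨ν, hν⟩
      exact hr ⟨ν, show 6 * ν + k = n by omega⟩
    beta_reduce
    rw [hpt n (n - k) rfl, chi_ndvd (n - k) hnd]
    simp
  calc ∑' ν : ℤ, (-1 : ℂ) ^ ν * besselJ (6 * ν + k) x
      = ∑' ν : ℤ, (ζ ^ (-(1*k)) * (besselJ (6*ν+k) x * (ζ ^ (1:ℕ)) ^ (6*ν+k))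
        + ζ ^ (-(3*k)) * (besselJ (6*ν+k) x * (ζ ^ (3:ℕ)) ^ (6*ν+k))
        + ζ ^ (-(5*k)) * (besselJ (6*ν+k) x * (ζ ^ (5:ℕ)) ^ (6*ν+k))
        + ζ ^ (-(7*k)) * (besselJ (6*ν+k) x * (ζ ^ (7:ℕ)) ^ (6*ν+k))
        + ζ ^ (-(9*k)) * (besselJ (6*ν+k) x * (ζ ^ (9:ℕ)) ^ (6*ν+k))
        + ζ ^ (-(11*k)) * (besselJ (6*ν+k) x * (ζ ^ (11:ℕ)) ^ (6*ν+k))) / 6 := by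
        refine tsum_congr fun ν => ?_
        rw [hpt (6*ν+k) (6*ν) (by ring), chi_dvd ν]
        ring
    _ = _ := by
        rw [Function.Injective.tsum_eq hinj hsupp]
        exact HS.tsum_eq

end BesselAux
open BesselAux

theorem stmt_12 (x : ℂ) :
    (∑' ν : ℤ, (-1 : ℂ) ^ ν * besselJ (6 * ν) x
        = (1 / 3) * (Complex.cos x + 2 * Complex.cos (x / 2))) ∧
    (∑' ν : ℤ, (-1 : ℂ) ^ ν * besselJ (6 * ν + 1) x
        = (1 / 3) * (Complex.sin x + Complex.sin (x / 2))) ∧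
    (∑' ν : ℤ, (-1 : ℂ) ^ ν * besselJ (6 * ν + 2) x
        = -((1 / 3) * (Complex.cos x - Complex.cos (x / 2)))) ∧
    (∑' ν : ℤ, (-1 : ℂ) ^ ν * besselJ (6 * ν + 3) x
        = -((1 / 3) * (Complex.sin x - 2 * Complex.sin (x / 2)))) := by
  refine ⟨?_, ?_, ?_, ?_⟩
  · have h := master x 0
    rw [zred (-(1*0)) 0 0 (by norm_num), zred (-(3*0)) 0 0 (by norm_num),
      zred (-(5*0)) 0 0 (by norm_num), zred (-(7*0)) 0 0 (by norm_num),
      zred (-(9*0)) 0 0 (by norm_num), zred (-(11*0)) 0 0 (by norm_num), pow_zero] at h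
    have h0 : ∑' ν : ℤ, (-1 : ℂ) ^ ν * besselJ (6 * ν) x
        = ∑' ν : ℤ, (-1 : ℂ) ^ ν * besselJ (6 * ν + 0) x :=
      tsum_congr fun ν => by rw [add_zero]
    rw [h0, h]
    simp only [Complex.cos]
    rw [show -x * Complex.I = -(x * Complex.I) by ring,
      show x / 2 * Complex.I = x * Complex.I / 2 by ring,
      show -(x / 2) * Complex.I = -(x * Complex.I / 2) by ring]
    ring
  · have h := master x 1
    rw [zred (-(1*1)) 11 (-1) (by norm_num), zred (-(3*1)) 9 (-1) (by norm_num),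
      zred (-(5*1)) 7 (-1) (by norm_num), zred (-(7*1)) 5 (-1) (by norm_num),
      zred (-(9*1)) 3 (-1) (by norm_num), zred (-(11*1)) 1 (-1) (by norm_num),
      pow_one, z11, z9, z7, z5, z3, z1] at h
    rw [h]
    simp only [Complex.sin]
    rw [show -x * Complex.I = -(x * Complex.I) by ring,
      show x / 2 * Complex.I = x * Complex.I / 2 by ring,
      show -(x / 2) * Complex.I = -(x * Complex.I / 2) by ring]
    ring
  · have h := master x 2
    rw [zred (-(1*2)) 10 (-1) (by norm_num), zred (-(3*2)) 6 (-1) (by norm_num),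
      zred (-(5*2)) 2 (-1) (by norm_num), zred (-(7*2)) 10 (-2) (by norm_num),
      zred (-(9*2)) 6 (-2) (by norm_num), zred (-(11*2)) 2 (-2) (by norm_num),
      z10, z6, z2] at h
    rw [h]
    simp only [Complex.cos]
    rw [show -x * Complex.I = -(x * Complex.I) by ring,
      show x / 2 * Complex.I = x * Complex.I / 2 by ring,
      show -(x / 2) * Complex.I = -(x * Complex.I / 2) by ring]
    ring
  · have h := master x 3
    rw [zred (-(1*3)) 9 (-1) (by norm_num), zred (-(3*3)) 3 (-1) (by norm_num),
      zred (-(5*3)) 9 (-2) (by norm_num), zred (-(7*3)) 3 (-2) (by norm_num),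
      zred (-(9*3)) 9 (-3) (by norm_num), zred (-(11*3)) 3 (-3) (by norm_num),
      z9, z3] at h
    rw [h]
    simp only [Complex.sin]
    rw [show -x * Complex.I = -(x * Complex.I) by ring,
      show x / 2 * Complex.I = x * Complex.I / 2 by ring,
      show -(x / 2) * Complex.I = -(x * Complex.I / 2) by ring]
    ring
end

section
/- For every complex number x, ∑_{ν ∈ ℤ} (-1)^ν J_{5ν}(x) = (1/5)[1 + 2 cos(x sin(π/5)) + 2 cos(x sin(3π/5))]. -/
open scoped Real

/-- reindexing `ℤ × ℕ ≃ ℕ × ℕ` by `(n, k) ↦ (k + n⁺, k + n⁻)`. -/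
def fiberEquiv : ℤ × ℕ ≃ ℕ × ℕ where
  toFun p := (p.2 + p.1.toNat, p.2 + (-p.1).toNat)
  invFun q := ((q.1 : ℤ) - q.2, min q.1 q.2)
  left_inv p := by
    obtain ⟨n, k⟩ := p
    simp only [Prod.mk.injEq]
    constructor <;> omega
  right_inv q := by
    obtain ⟨m, k⟩ := q
    simp only [Prod.mk.injEq]
    constructor <;> omega

lemma summable_double (z u : ℂ) :
    Summable (fun p : ℕ × ℕ =>
      (z * u) ^ p.1 / p.1.factorial * ((-z / u) ^ p.2 / p.2.factorial)) := by
  apply Summable.of_norm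
  have h1 : Summable (fun m : ℕ => ‖z * u‖ ^ m / m.factorial) := Real.summable_pow_div_factorial _
  have h2 : Summable (fun m : ℕ => ‖-z / u‖ ^ m / m.factorial) := Real.summable_pow_div_factorial _
  have h := h1.mul_of_nonneg h2 (fun m => by positivity) (fun k => by positivity)
  apply h.congr
  intro p
  simp [norm_mul, norm_div, norm_pow, Complex.norm_natCast]


lemma hasSum_besselJ_zpow (x u : ℂ) (hu : u ≠ 0) :
    HasSum (fun n : ℤ => besselJ n x * u ^ n)
      (Complex.exp (x / 2 * u - x / 2 / u)) := by
  set z := x / 2 with hz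
  set A : ℕ → ℂ := fun m => (z * u) ^ m / m.factorial with hA
  set B : ℕ → ℂ := fun m => (-z / u) ^ m / m.factorial with hB
  set f : ℕ × ℕ → ℂ := fun p => A p.1 * B p.2 with hf
  have hsum : Summable f := summable_double z u
  have ha : HasSum A (Complex.exp (z * u)) := by
    rw [Complex.exp_eq_exp_ℂ]; exact NormedSpace.expSeries_div_hasSum_exp (z * u)
  have hb : HasSum B (Complex.exp (-z / u)) := by
    rw [Complex.exp_eq_exp_ℂ]; exact NormedSpace.expSeries_div_hasSum_exp (-z / u)
  have hprod : HasSum f (Complex.exp (z * u) * Complex.exp (-z / u)) := ha.mul hb hsum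
  have hE : Complex.exp (z * u) * Complex.exp (-z / u) = Complex.exp (z * u - z / u) := by
    rw [← Complex.exp_add]; ring_nf
  rw [hE] at hprod
  have hcomp : HasSum (f ∘ fiberEquiv) (Complex.exp (z * u - z / u)) :=
    (fiberEquiv.hasSum_iff).mpr hprod
  clear_value z A B f
  refine HasSum.prod_fiberwise hcomp fun n => ?_
  have hsn : Summable (fun k => (f ∘ fiberEquiv) (n, k)) :=
    ((fiberEquiv.summable_iff).mpr hsum).prod_factor n
  rcases le_or_gt 0 n with hn | hn
  · -- nonnegative order
    set n' := n.toNat with hn'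
    have hnn : n = (n' : ℤ) := by omega
    have key : ∀ k : ℕ, (f ∘ fiberEquiv) (n, k)
        = ((-1 : ℂ) ^ k / ((k.factorial : ℂ) * ((k + n').factorial : ℂ)) * z ^ (2 * k + n'))
          * u ^ n' := by
      intro k
      simp only [hf, Function.comp_apply, fiberEquiv, Equiv.coe_fn_mk]
      have e2 : k + (-n).toNat = k := by omega
      rw [e2, hA, hB]
      simp only
      rw [mul_pow, div_pow, neg_pow]
      have hu' : (u : ℂ) ^ k ≠ 0 := pow_ne_zero _ hu
      have h1 : ((k + n.toNat).factorial : ℂ) ≠ 0 := Nat.cast_ne_zero.2 (Nat.factorial_ne_zero _)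
      have h2 : ((k.factorial : ℂ)) ≠ 0 := Nat.cast_ne_zero.2 (Nat.factorial_ne_zero _)
      simp only [← hn'] at h1 ⊢
      field_simp
      ring
    set g : ℕ → ℂ := fun k =>
      (-1 : ℂ) ^ k / ((k.factorial : ℂ) * ((k + n').factorial : ℂ)) * z ^ (2 * k + n') with hg
    have hgs : Summable g := by
      refine (hsn.mul_right ((u ^ n' : ℂ)⁻¹)).congr fun k => ?_
      rw [key k, mul_assoc, mul_inv_cancel₀ (pow_ne_zero _ hu), mul_one]
    have hgsum : HasSum g (besselJNat n' x) := by
      have hdef : besselJNat n' x = ∑' k, g k := by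
        simp only [besselJNat, hg, hz]
      rw [hdef]; exact hgs.hasSum
    have hmain := hgsum.mul_right (u ^ n' : ℂ)
    have hbj : besselJ n x = besselJNat n' x := by rw [besselJ, if_pos hn]
    have huz : (u : ℂ) ^ n = u ^ n' := by rw [hnn, zpow_natCast]
    rw [hbj, huz]
    exact (funext key : (fun k => (f ∘ fiberEquiv) (n, k)) = _) ▸ hmain
  · -- negative order
    set n' := n.natAbs with hn'
    have hn0 : n' ≠ 0 := by omega
    have key : ∀ k : ℕ, (f ∘ fiberEquiv) (n, k)
        = ((-1 : ℂ) ^ k / ((k.factorial : ℂ) * ((k + n').factorial : ℂ)) * z ^ (2 * k + n'))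
          * ((-1 : ℂ) ^ n' * ((u : ℂ) ^ n')⁻¹) := by
      intro k
      simp only [hf, Function.comp_apply, fiberEquiv, Equiv.coe_fn_mk]
      have e1 : k + n.toNat = k := by omega
      have e2 : k + (-n).toNat = k + n' := by omega
      rw [e1, e2, hA, hB]
      simp only
      rw [mul_pow, div_pow, neg_pow]
      have hu1 : (u : ℂ) ^ (k + n') ≠ 0 := pow_ne_zero _ hu
      have hu2 : (u : ℂ) ^ n' ≠ 0 := pow_ne_zero _ hu
      have h1 : (((k + n').factorial : ℕ) : ℂ) ≠ 0 := Nat.cast_ne_zero.2 (Nat.factorial_ne_zero _)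
      have h2 : ((k.factorial : ℕ) : ℂ) ≠ 0 := Nat.cast_ne_zero.2 (Nat.factorial_ne_zero _)
      field_simp
      ring
    set c : ℂ := (-1 : ℂ) ^ n' * ((u : ℂ) ^ n')⁻¹ with hc
    have hcne : c ≠ 0 := by
      apply mul_ne_zero
      · exact pow_ne_zero _ (by norm_num)
      · exact inv_ne_zero (pow_ne_zero _ hu)
    set g : ℕ → ℂ := fun k =>
      (-1 : ℂ) ^ k / ((k.factorial : ℂ) * ((k + n').factorial : ℂ)) * z ^ (2 * k + n') with hg
    have hgs : Summable g := by
      refine (hsn.mul_right (c⁻¹)).congr fun k => ?_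
      rw [key k, mul_assoc, mul_inv_cancel₀ hcne, mul_one]
    have hgsum : HasSum g (besselJNat n' x) := by
      have hdef : besselJNat n' x = ∑' k, g k := by
        simp only [besselJNat, hg, hz]
      rw [hdef]; exact hgs.hasSum
    have hmain := hgsum.mul_right c
    have hbj : besselJ n x = (-1 : ℂ) ^ n' * besselJNat n' x := by
      rw [besselJ, if_neg (by omega), hn']
    have huz : (u : ℂ) ^ n = ((u : ℂ) ^ n')⁻¹ := by
      rw [show n = -(n' : ℤ) by omega, zpow_neg, zpow_natCast]
    rw [hbj, huz, show (-1 : ℂ) ^ n' * besselJNat n' x * ((u : ℂ) ^ n')⁻¹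
      = besselJNat n' x * c by rw [hc]; ring]
    exact (funext key : (fun k => (f ∘ fiberEquiv) (n, k)) = _) ▸ hmain


theorem stmt_19 (x : ℂ) :
    ∑' ν : ℤ, (-1 : ℂ) ^ ν * besselJ (5 * ν) x
      = (1 / 5) * (1 + 2 * Complex.cos (x * (Real.sin (π / 5) : ℝ))
          + 2 * Complex.cos (x * (Real.sin (3 * π / 5) : ℝ))) := by
  set θ : ℕ → ℝ := fun k => (2 * k + 1) * π / 5 with hθ
  set u : ℕ → ℂ := fun k => Complex.exp ((θ k : ℂ) * Complex.I) with hu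
  have hune : ∀ k, u k ≠ 0 := fun k => Complex.exp_ne_zero _
  -- each single Jacobi-Anger sum
  have hJA : ∀ k, HasSum (fun n : ℤ => besselJ n x * (u k) ^ n)
      (Complex.exp (x * (Real.sin (θ k) : ℂ) * Complex.I)) := by
    intro k
    have h := hasSum_besselJ_zpow x (u k) (hune k)
    convert h using 2
    rw [hu]; simp only
    rw [div_eq_mul_inv _ (Complex.exp _), ← Complex.exp_neg, ← neg_mul,
      Complex.ofReal_sin, Complex.sin]
    linear_combination (x * (Complex.exp (-(θ k : ℂ) * Complex.I)
      - Complex.exp ((θ k : ℂ) * Complex.I)) / 2) * Complex.I_sq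
  -- the sum of the five series
  set T : ℂ := ∑ k ∈ Finset.range 5, Complex.exp (x * (Real.sin (θ k) : ℂ) * Complex.I)
    with hT
  have hsum5 : HasSum (fun n : ℤ => ∑ k ∈ Finset.range 5, besselJ n x * (u k) ^ n) T :=
    hasSum_sum fun k _ => hJA k
  -- root of unity sums
  set S : ℤ → ℂ := fun n => ∑ k ∈ Finset.range 5, (u k) ^ n with hS
  have hsumS : HasSum (fun n : ℤ => besselJ n x * S n) T := by
    refine hsum5.congr_fun ?_
    intro n
    rw [hS, Finset.mul_sum]
  have hpow : ∀ (n : ℤ) (k : ℕ), (u k) ^ n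
      = Complex.exp ((n : ℂ) * π * Complex.I / 5)
        * Complex.exp (2 * (n : ℂ) * π * Complex.I / 5) ^ k := by
    intro n k
    rw [hu]; simp only
    rw [← Complex.exp_int_mul, ← Complex.exp_nat_mul, ← Complex.exp_add]
    congr 1
    rw [hθ]; push_cast; ring
  have hS_van : ∀ n : ℤ, ¬ (5 ∣ n) → S n = 0 := by
    intro n hn
    have hw : Complex.exp (2 * (n : ℂ) * π * Complex.I / 5) ≠ 1 := by
      intro hcon
      obtain ⟨m, hm⟩ := Complex.exp_eq_one_iff.mp hcon
      have hpi : (π : ℂ) ≠ 0 := Complex.ofReal_ne_zero.2 Real.pi_ne_zero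
      have : (n : ℂ) = 5 * m := by
        have hne : (2 : ℂ) * π * Complex.I ≠ 0 := by
          simp [hpi, Complex.I_ne_zero]
        have h' : (n : ℂ) * (2 * π * Complex.I) = 5 * m * (2 * π * Complex.I) := by
          linear_combination 5 * hm
        exact mul_right_cancel₀ hne h'
      have : n = 5 * m := by exact_mod_cast this
      exact hn ⟨m, this⟩
    rw [hS]
    simp only [hpow n]
    rw [← Finset.mul_sum, geom_sum_eq hw]
    have h5 : Complex.exp (2 * (n : ℂ) * π * Complex.I / 5) ^ 5
        = Complex.exp ((n : ℂ) * (2 * π * Complex.I)) := by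
      rw [← Complex.exp_nat_mul]; congr 1; push_cast; ring
    rw [h5, Complex.exp_int_mul_two_pi_mul_I, sub_self, zero_div, mul_zero]
  have hS_val : ∀ ν : ℤ, S (5 * ν) = 5 * (-1 : ℂ) ^ ν := by
    intro ν
    rw [hS]
    simp only [hpow (5 * ν)]
    have h1 : Complex.exp (2 * ((5 * ν : ℤ) : ℂ) * π * Complex.I / 5)
        = Complex.exp ((ν : ℂ) * (2 * π * Complex.I)) := by congr 1; push_cast; ring
    have h2 : Complex.exp (((5 * ν : ℤ) : ℂ) * π * Complex.I / 5)
        = (-1 : ℂ) ^ ν := by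
      rw [show ((5 * ν : ℤ) : ℂ) * π * Complex.I / 5 = (ν : ℂ) * ((π : ℂ) * Complex.I) by
        push_cast; ring, Complex.exp_int_mul, Complex.exp_pi_mul_I]
    rw [h1, Complex.exp_int_mul_two_pi_mul_I, h2]
    simp [Finset.sum_const, mul_comm]
  -- restrict to multiples of 5
  have hinj : Function.Injective (fun ν : ℤ => 5 * ν) := fun a b h => by
    simpa using h
  have hvan : ∀ n ∉ Set.range (fun ν : ℤ => 5 * ν), besselJ n x * S n = 0 := by
    intro n hn
    have hdvd : ¬ (5 ∣ n) := by
      intro ⟨c, hc⟩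
      exact hn ⟨c, hc.symm⟩
    rw [hS_van n hdvd, mul_zero]
  have hcomp5 : HasSum ((fun n : ℤ => besselJ n x * S n) ∘ (fun ν => 5 * ν)) T :=
    (hinj.hasSum_iff hvan).mpr hsumS
  have hfin : HasSum (fun ν : ℤ => (-1 : ℂ) ^ ν * besselJ (5 * ν) x) (T / 5) := by
    refine (hcomp5.div_const 5).congr_fun fun ν => ?_
    show _ = besselJ (5 * ν) x * S (5 * ν) / 5
    rw [hS_val ν]
    ring
  rw [hfin.tsum_eq]
  -- evaluate T
  have hcos : ∀ s : ℝ, Complex.exp (x * (s : ℂ) * Complex.I)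
      + Complex.exp (x * ((-s : ℝ) : ℂ) * Complex.I) = 2 * Complex.cos (x * (s : ℝ)) := by
    intro s
    rw [Complex.cos, show x * ((-s : ℝ) : ℂ) * Complex.I
      = -(x * (s : ℂ)) * Complex.I by push_cast; ring,
      show x * (s : ℂ) * Complex.I = x * (s : ℂ) * Complex.I by ring]
    ring
  have s0 : Real.sin (θ 0) = Real.sin (π / 5) := by rw [hθ]; norm_num
  have s1 : Real.sin (θ 1) = Real.sin (3 * π / 5) := by
    rw [hθ]; push_cast; ring_nf
  have s2 : Real.sin (θ 2) = 0 := by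
    rw [show θ 2 = π by rw [hθ]; push_cast; ring, Real.sin_pi]
  have s3 : Real.sin (θ 3) = -Real.sin (3 * π / 5) := by
    rw [show θ 3 = π - -(2 * π / 5) by rw [hθ]; push_cast; ring, Real.sin_pi_sub,
      Real.sin_neg, show (3 : ℝ) * π / 5 = π - 2 * π / 5 by ring, Real.sin_pi_sub]
  have s4 : Real.sin (θ 4) = -Real.sin (π / 5) := by
    rw [show θ 4 = π - -(4 * π / 5) by rw [hθ]; push_cast; ring, Real.sin_pi_sub,
      Real.sin_neg, show (4 : ℝ) * π / 5 = π - π / 5 by ring, Real.sin_pi_sub]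
  have hTval : T = 1 + 2 * Complex.cos (x * (Real.sin (π / 5) : ℝ))
      + 2 * Complex.cos (x * (Real.sin (3 * π / 5) : ℝ)) := by
    rw [hT]
    rw [Finset.sum_range_succ, Finset.sum_range_succ, Finset.sum_range_succ,
      Finset.sum_range_succ, Finset.sum_range_one]
    rw [s0, s1, s2, s3, s4]
    rw [← hcos (Real.sin (π / 5)), ← hcos (Real.sin (3 * π / 5))]
    push_cast
    ring_nf
    simp [Complex.exp_zero]
    ring
  rw [hTval]
  ring
end
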